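/- arXiv:1909.00038 — 5 statements merged into one kernel-verified Lean document; each statement's English description precedes it below -/
import Mathlib

section
/- Let $p_V, q_V \in (0,1)$ with $q_V = 1-p_V$ and $p_V/q_V = V/\lambda$ for a constant $\lambda>0$, and let $\mu$ be the exponential distribution with rate $\lambda$ on $(0,\infty)$. Then for every $k > 0$, $\lim_{V\to\infty} V \sup_{1 \le m \le kV} \left| p_V^m q_V - \mu\left[\tfrac{m}{V}, \tfrac{m+1}{V}\right) \right| = 0$, where the supremum is over positive integers $m \le kV$. -/
open Filter

set_option maxHeartbeats 1000000 in
/-- Uniform convergence of geometric burst-size probabilities to the exponential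
distribution cell probabilities: for every `k > 0`,
`V * sup_{1 ≤ m ≤ kV} |p_V^m q_V - μ[m/V, (m+1)/V)| → 0` as `V → ∞`, where
`μ[m/V,(m+1)/V) = exp (-lam*m/V) - exp (-lam*(m+1)/V)` for the exponential
distribution with rate `lam`. Stated in ε-δ form. -/
theorem geometric_to_exponential_uniform (lam : ℝ) (hlam : 0 < lam)
    (p q : ℝ → ℝ)
    (hp : ∀ V > 0, p V ∈ Set.Ioo (0:ℝ) 1)
    (hq : ∀ V > 0, q V = 1 - p V)
    (hscale : ∀ V > 0, p V / q V = V / lam)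
    (k : ℝ) (hk : 0 < k) :
    ∀ ε > 0, ∃ V₀ > 0, ∀ V ≥ V₀, ∀ m : ℕ, 1 ≤ m → (m : ℝ) ≤ k * V →
      V * |p V ^ m * q V -
        (Real.exp (-(lam * m / V)) - Real.exp (-(lam * (m + 1) / V)))| < ε := by
  intro ε hε
  set C : ℝ := k * lam ^ 3 + lam ^ 2 with hC
  have hC0 : 0 < C := by positivity
  refine ⟨max 1 (C / ε + 1), lt_of_lt_of_le one_pos (le_max_left _ _), ?_⟩
  intro V hV m hm hmk
  have hV1 : (1:ℝ) ≤ V := le_trans (le_max_left _ _) hV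
  have hV0 : (0:ℝ) < V := lt_of_lt_of_le one_pos hV1
  have hVC : C / ε < V := lt_of_lt_of_le (by linarith [le_trans (le_max_right 1 (C/ε+1)) hV]) le_rfl
  set b : ℝ := lam / V with hbdef
  have hb : 0 < b := div_pos hlam hV0
  have h1b : (0:ℝ) < 1 + b := by linarith
  obtain ⟨hp0, hp1⟩ := hp V hV0
  have hqv := hq V hV0
  have hq0 : 0 < q V := by rw [hqv]; linarith
  -- p V = 1/(1+b), q V = b/(1+b)
  have hs := hscale V hV0
  rw [div_eq_div_iff hq0.ne' hlam.ne'] at hs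
  have hpeq : p V = 1 / (1 + b) := by
    rw [hqv] at hs
    rw [hbdef]
    field_simp
    nlinarith [hs]
  have hqeq : q V = b / (1 + b) := by
    rw [hqv, hpeq]
    field_simp
    ring
  set a : ℝ := Real.log (1 + b) with hadef
  have ha0 : 0 ≤ a := Real.log_nonneg (by linarith)
  have hpa : p V = Real.exp (-a) := by
    rw [hpeq, Real.exp_neg, Real.exp_log h1b, one_div]
  have ha_le : a ≤ b := by
    have := Real.log_le_sub_one_of_pos h1b
    linarith
  have ha_ge : b - a ≤ b ^ 2 := by
    have h := Real.log_le_sub_one_of_pos (inv_pos.mpr h1b)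
    rw [Real.log_inv] at h
    have h2 : 1 - (1 + b)⁻¹ ≤ a := by linarith
    have h3 : b - b / (1 + b) = b ^ 2 / (1 + b) := by field_simp; ring
    have h4 : 1 - (1 + b)⁻¹ = b / (1 + b) := by field_simp; ring
    have h5 : b ^ 2 / (1 + b) ≤ b ^ 2 := by
      rw [div_le_iff₀ h1b]; nlinarith
    linarith [h4 ▸ h2]
  -- exp facts
  have hBdef : Real.exp (-(lam * m / V)) = Real.exp (-((m:ℝ) * b)) := by
    congr 1
    rw [hbdef]; field_simp
  have hB1 : Real.exp (-(lam * (m+1) / V)) = Real.exp (-((m:ℝ) * b)) * Real.exp (-b) := by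
    rw [← Real.exp_add]
    congr 1
    rw [hbdef]; field_simp; ring
  have hA : p V ^ m = Real.exp (-((m:ℝ) * a)) := by
    rw [hpa, ← Real.exp_nat_mul]
    congr 1; ring
  have hexp1 : ∀ x : ℝ, 0 ≤ x → 1 - Real.exp (-x) ≤ x := by
    intro x hx
    have := Real.add_one_le_exp (-x)
    linarith
  have hexp2 : ∀ x : ℝ, 0 ≤ x → 0 ≤ 1 - Real.exp (-x) := by
    intro x hx
    have : Real.exp (-x) ≤ 1 := Real.exp_le_one_iff.mpr (by linarith)
    linarith
  have hBle1 : Real.exp (-((m:ℝ) * b)) ≤ 1 :=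
    Real.exp_le_one_iff.mpr (neg_nonpos_of_nonneg (by positivity))
  have hB0 : 0 < Real.exp (-((m:ℝ) * b)) := Real.exp_pos _
  -- key1 : 0 ≤ p^m - exp(-mb) ≤ m * b^2
  have hm0 : (0:ℝ) ≤ (m:ℝ) := Nat.cast_nonneg m
  have key1a : Real.exp (-((m:ℝ) * b)) ≤ p V ^ m := by
    rw [hA]
    exact Real.exp_le_exp.mpr (by nlinarith)
  have key1b : p V ^ m - Real.exp (-((m:ℝ) * b)) ≤ (m:ℝ) * b ^ 2 := by
    rw [hA]
    have hsplit : Real.exp (-((m:ℝ) * b)) = Real.exp (-((m:ℝ) * a)) * Real.exp (-((m:ℝ) * (b - a))) := by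
      rw [← Real.exp_add]; congr 1; ring
    rw [hsplit]
    have h1 : Real.exp (-((m:ℝ)*a)) - Real.exp (-((m:ℝ)*a)) * Real.exp (-((m:ℝ)*(b-a)))
        = Real.exp (-((m:ℝ)*a)) * (1 - Real.exp (-((m:ℝ)*(b-a)))) := by ring
    rw [h1]
    have hba : (0:ℝ) ≤ (m:ℝ) * (b - a) := mul_nonneg hm0 (by linarith)
    have h2 := hexp1 _ hba
    have h3 := hexp2 _ hba
    have h4 : Real.exp (-((m:ℝ)*a)) ≤ 1 :=
      Real.exp_le_one_iff.mpr (neg_nonpos_of_nonneg (mul_nonneg hm0 ha0))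
    have h5 : Real.exp (-((m:ℝ)*a)) * (1 - Real.exp (-((m:ℝ)*(b-a)))) ≤
        (m:ℝ) * (b - a) := by
      calc Real.exp (-((m:ℝ)*a)) * (1 - Real.exp (-((m:ℝ)*(b-a))))
          ≤ 1 * (1 - Real.exp (-((m:ℝ)*(b-a)))) := mul_le_mul_of_nonneg_right h4 h3
        _ = 1 - Real.exp (-((m:ℝ)*(b-a))) := one_mul _
        _ ≤ (m:ℝ) * (b - a) := h2
    have h6 : (m:ℝ) * (b - a) ≤ (m:ℝ) * b ^ 2 := mul_le_mul_of_nonneg_left ha_ge hm0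
    linarith
  -- key2 : 0 ≤ (1 - exp(-b)) - q V ≤ b^2
  have hebinv : Real.exp (-b) ≤ (1 + b)⁻¹ := by
    rw [Real.exp_neg]
    apply inv_anti₀ h1b
    linarith [Real.add_one_le_exp b]
  have key2a : q V ≤ 1 - Real.exp (-b) := by
    rw [hqeq]
    have h4 : 1 - (1 + b)⁻¹ = b / (1 + b) := by field_simp; ring
    linarith [hebinv]
  have key2b : (1 - Real.exp (-b)) - q V ≤ b ^ 2 := by
    rw [hqeq]
    have h1 := hexp1 b hb.le
    have h3 : b - b / (1 + b) = b ^ 2 / (1 + b) := by field_simp; ring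
    have h5 : b ^ 2 / (1 + b) ≤ b ^ 2 :=
      div_le_self (by positivity) (by linarith)
    linarith only [h1, h3, h5]
  -- q bounds
  have hqle : q V ≤ b := by
    rw [hqeq]
    exact div_le_self hb.le (by linarith)
  -- assemble
  rw [hBdef, hB1]
  set B := Real.exp (-((m:ℝ) * b)) with hBd
  have hfact : B - B * Real.exp (-b) = B * (1 - Real.exp (-b)) := by ring
  rw [hfact]
  have habs : |p V ^ m * q V - B * (1 - Real.exp (-b))| ≤ (m:ℝ) * b ^ 3 + b ^ 2 := by
    rw [abs_le]
    constructor
    · nlinarith [hexp2 b hb.le]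
    · nlinarith [hexp2 b hb.le, hexp1 b hb.le]
  have hmb : (m:ℝ) * b ^ 3 + b ^ 2 ≤ k * V * b ^ 3 + b ^ 2 := by
    have h7 := mul_le_mul_of_nonneg_right hmk (pow_nonneg hb.le 3)
    linarith only [h7]
  have hcalc : V * (k * V * b ^ 3 + b ^ 2) = C / V := by
    rw [hbdef, hC]; field_simp
  have hfin : C / V < ε := by
    rw [div_lt_iff₀ hV0]
    have : C / ε < V := hVC
    rw [div_lt_iff₀ hε] at this
    linarith
  calc V * |p V ^ m * q V - B * (1 - Real.exp (-b))|
      ≤ V * ((m:ℝ) * b ^ 3 + b ^ 2) := by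
        exact mul_le_mul_of_nonneg_left habs hV0.le
    _ ≤ V * (k * V * b ^ 3 + b ^ 2) := mul_le_mul_of_nonneg_left hmb hV0.le
    _ = C / V := hcalc
    _ < ε := hfin
end

section
/- Let $c: \mathbb{R}_+ \to \mathbb{R}_+$ be a constant function $c(x) = c > 0$, let $r, \lambda > 0$, and let $p(x) = \frac{\lambda^{c/r}}{\Gamma(c/r)} x^{c/r - 1} e^{-\lambda x}$ for $x > 0$. Then $p$ is a probability density on $(0,\infty)$ and satisfies the stationary equation for the gene expression PDMP generator: for all continuously differentiable $f$ with compact support in $[0,\infty)$, $\int_0^\infty \left[ -r x f'(x) + c \int_0^\infty (f(x+y) - f(x)) \lambda e^{-\lambda y}\, dy \right] p(x)\, dx = 0$. -/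
open MeasureTheory Real

open Set Filter in
/-- The gamma density `p(x) = λ^{c/r}/Γ(c/r) x^{c/r-1} e^{-λx}` is a
probability density on `(0,∞)` and is stationary for the gene expression PDMP
generator `A f(x) = -r x f'(x) + c ∫₀^∞ (f(x+y)-f(x)) λ e^{-λy} dy`. -/
theorem gamma_stationary_unregulated (r lam c : ℝ)
    (hr : 0 < r) (hlam : 0 < lam) (hc : 0 < c) :
    (∫ x in Set.Ioi (0:ℝ),
        lam ^ (c / r) / Real.Gamma (c / r) * x ^ (c / r - 1) * exp (-lam * x))
      = 1 ∧
    ∀ f : ℝ → ℝ, ContDiff ℝ 1 f → HasCompactSupport f →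
      (∫ x in Set.Ioi (0:ℝ),
        (-r * x * deriv f x
          + c * ∫ y in Set.Ioi (0:ℝ), (f (x + y) - f x) * (lam * exp (-lam * y)))
        * (lam ^ (c / r) / Real.Gamma (c / r) * x ^ (c / r - 1) * exp (-lam * x)))
      = 0 := by
  have hα : 0 < c / r := div_pos hc hr
  set α := c / r with hαdef
  have hΓ : 0 < Real.Gamma α := Real.Gamma_pos_of_pos hα
  set C := lam ^ α / Real.Gamma α with hCdef
  have hCpos : 0 < C := div_pos (Real.rpow_pos_of_pos hlam α) hΓ
  have hcα : c = r * α := by rw [hαdef]; field_simp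
  constructor
  · -- normalization
    simp_rw [mul_assoc, neg_mul]
    rw [MeasureTheory.integral_const_mul, Real.integral_rpow_mul_exp_neg_mul_Ioi hα hlam,
      hCdef, one_div, Real.inv_rpow hlam.le]
    field_simp
  · intro f hf hsupp
    have hfc : Continuous f := hf.continuous
    have hdf : ∀ x, HasDerivAt f (deriv f x) x :=
      fun x => ((hf.differentiable one_ne_zero) x).hasDerivAt
    have hdfc : Continuous (deriv f) := hf.continuous_deriv le_rfl
    have hdsupp : HasCompactSupport (deriv f) := hsupp.deriv
    obtain ⟨M, hMpos, hM, hM'⟩ : ∃ M : ℝ, 0 < M ∧ (∀ t, M ≤ t → f t = 0) ∧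
        (∀ t, M ≤ t → deriv f t = 0) := by
      obtain ⟨m, hm⟩ := hsupp.isCompact.bddAbove
      have hnot : ∀ t, max m 0 + 1 ≤ t → t ∉ tsupport f := by
        intro t ht hts
        have h1 := hm hts
        have h2 := le_max_left m 0
        linarith
      refine ⟨max m 0 + 1, by positivity, fun t ht => image_eq_zero_of_notMem_tsupport (hnot t ht),
        fun t ht => ?_⟩
      by_contra h
      exact hnot t ht (support_deriv_subset (Function.mem_support.mpr h))
    set G : ℝ → ℝ := fun t => f t * exp (-lam * t) with hGdef
    have hGc : Continuous G := hfc.mul (by fun_prop)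
    have hGsupp : HasCompactSupport G := hsupp.mul_right
    have hGint : Integrable G := hGc.integrable_of_hasCompactSupport hGsupp
    have hG0 : ∀ t, M ≤ t → G t = 0 := fun t ht => by simp [hGdef, hM t ht]
    set F : ℝ → ℝ := fun x => ∫ t in Ioi x, G t with hFdef
    have hFrepr : ∀ x, F x = (∫ t, G t) - ∫ t in Iic x, G t := by
      intro x
      have h := integral_add_compl (measurableSet_Iic (a := x)) hGint (f := G)
      rw [compl_Iic] at h
      simp only [hFdef]
      linarith
    have hFderiv : ∀ x, HasDerivAt F (-(G x)) x := by
      intro x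
      have h1 : HasDerivAt (fun y => ∫ t in Iic y, G t) (G x) x := by
        have hrepr2 : (fun y => ∫ t in Iic y, G t)
            = fun y => (∫ t in Iic (0:ℝ), G t) + ∫ t in (0:ℝ)..y, G t := by
          funext y
          rw [← intervalIntegral.integral_Iic_sub_Iic hGint.integrableOn hGint.integrableOn]
          ring
        rw [hrepr2]
        exact (intervalIntegral.integral_hasDerivAt_right (hGc.intervalIntegrable _ _)
          (hGc.stronglyMeasurableAtFilter _ _) hGc.continuousAt).const_add _
      have h2 : HasDerivAt (fun y => (∫ t, G t) - ∫ t in Iic y, G t) (-(G x)) x :=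
        h1.const_sub _
      exact h2.congr_of_eventuallyEq (Eventually.of_forall hFrepr)
    have hFcont : Continuous F :=
      continuous_iff_continuousAt.mpr fun x => (hFderiv x).differentiableAt.continuousAt
    have hF0 : ∀ x, M ≤ x → F x = 0 := fun x hx =>
      setIntegral_eq_zero_of_forall_eq_zero fun t ht => hG0 t (hx.trans (le_of_lt ht))
    -- translation identity
    have htrans : ∀ x : ℝ, (∫ y in Ioi (0:ℝ), G (x + y)) = F x := by
      intro x
      have hemb : MeasurableEmbedding (fun y : ℝ => x + y) := by
        have := (MeasurableEquiv.addLeft x).measurableEmbedding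
        simpa using this
      have h := (measurePreserving_add_left volume x).setIntegral_preimage_emb
        hemb G (Ioi x)
      have hpre : (fun y : ℝ => x + y) ⁻¹' (Ioi x) = Ioi (0:ℝ) := by
        ext y; simp
      rw [hpre] at h
      exact h
    have hexpint : IntegrableOn (fun y => exp (-lam * y)) (Ioi (0:ℝ)) :=
      exp_neg_integrableOn_Ioi 0 hlam
    have hexpval : (∫ y in Ioi (0:ℝ), exp (-lam * y)) = lam⁻¹ := by
      have h := integral_comp_mul_left_Ioi (fun u => exp (-u)) 0 hlam
      simp only [mul_zero, integral_exp_neg_Ioi, neg_zero, Real.exp_zero, smul_eq_mul,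
        mul_one] at h
      simpa [neg_mul] using h
    have hinner : ∀ x : ℝ, (∫ y in Ioi (0:ℝ), (f (x + y) - f x) * (lam * exp (-lam * y)))
        = lam * exp (lam * x) * F x - f x := by
      intro x
      have hA_supp : HasCompactSupport (fun y => f (x + y)) := by
        have h := hsupp.comp_homeomorph (Homeomorph.addLeft x)
        simpa [Function.comp_def] using h
      have hA_cont : Continuous fun y => f (x + y) := hfc.comp (continuous_const.add continuous_id)
      have hAint : IntegrableOn (fun y => f (x + y) * (lam * exp (-lam * y))) (Ioi (0:ℝ)) :=
        ((hA_cont.mul (by fun_prop)).integrable_of_hasCompactSupport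
          (hA_supp.mul_right)).integrableOn
      have hBint : IntegrableOn (fun y => f x * (lam * exp (-lam * y))) (Ioi (0:ℝ)) :=
        (hexpint.const_mul lam).const_mul (f x)
      have hptA : ∀ y : ℝ, f (x + y) * (lam * exp (-lam * y))
          = lam * exp (lam * x) * G (x + y) := by
        intro y
        have hexp1 : exp (lam * x) * exp (-lam * (x + y)) = exp (-lam * y) := by
          rw [← Real.exp_add]; congr 1; ring
        simp only [hGdef]
        linear_combination (-(lam * f (x + y))) * hexp1
      simp_rw [sub_mul]
      rw [MeasureTheory.integral_sub hAint hBint]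
      have hA : (∫ y in Ioi (0:ℝ), f (x + y) * (lam * exp (-lam * y)))
          = lam * exp (lam * x) * F x := by
        calc (∫ y in Ioi (0:ℝ), f (x + y) * (lam * exp (-lam * y)))
            = ∫ y in Ioi (0:ℝ), lam * exp (lam * x) * G (x + y) := by simp_rw [hptA]
          _ = lam * exp (lam * x) * ∫ y in Ioi (0:ℝ), G (x + y) := by
              rw [MeasureTheory.integral_const_mul]
          _ = lam * exp (lam * x) * F x := by rw [htrans]
      have hB : (∫ y in Ioi (0:ℝ), f x * (lam * exp (-lam * y))) = f x := by
        rw [MeasureTheory.integral_const_mul, MeasureTheory.integral_const_mul, hexpval]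
        field_simp
      rw [hA, hB]
    -- integrability helper
    have hbase : IntegrableOn (fun x : ℝ => x ^ (α - 1) * exp (-(lam * x))) (Ioi 0) := by
      have h := integrableOn_rpow_mul_exp_neg_mul_rpow
        (by linarith : (-1:ℝ) < α - 1) zero_lt_one hlam
      simpa [Real.rpow_one] using h
    have key : ∀ h : ℝ → ℝ, Continuous h → (∀ t, M ≤ t → h t = 0) →
        IntegrableOn (fun x => x ^ (α - 1) * h x) (Ioi (0:ℝ)) := by
      intro h hcont h0
      obtain ⟨K, hK⟩ := (isCompact_Icc (a := (0:ℝ)) (b := M)).exists_bound_of_continuousOn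
        hcont.continuousOn
      have hK0 : 0 ≤ K := le_trans (norm_nonneg _) (hK 0 ⟨le_rfl, hMpos.le⟩)
      apply Integrable.mono' (hbase.const_mul (K * exp (lam * M)))
      · exact ((measurable_id'.pow_const _).mul hcont.measurable).aestronglyMeasurable
      · filter_upwards [ae_restrict_mem measurableSet_Ioi] with x hx
        have hx0 : (0:ℝ) < x := hx
        have hxa : 0 ≤ x ^ (α - 1) := Real.rpow_nonneg hx0.le _
        rw [Real.norm_eq_abs, abs_mul, abs_of_nonneg hxa]
        rcases le_or_gt x M with hxM | hxM
        · have h1 : |h x| ≤ K := by simpa [Real.norm_eq_abs] using hK x ⟨hx0.le, hxM⟩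
          have h2 : (1:ℝ) ≤ exp (lam * M) * exp (-(lam * x)) := by
            rw [← Real.exp_add]
            apply Real.one_le_exp
            nlinarith
          have h3 : x ^ (α - 1) * |h x| ≤ x ^ (α - 1) * K :=
            mul_le_mul_of_nonneg_left h1 hxa
          have h4 := mul_le_mul_of_nonneg_left h2 (mul_nonneg hK0 hxa)
          nlinarith
        · rw [h0 x hxM.le]
          simp only [abs_zero, mul_zero]
          positivity
    set κ : ℝ := C * lam * r / c with hκdef
    have hκ : c * κ = C * lam * r := by rw [hκdef]; field_simp
    set D₁ : ℝ → ℝ := fun x => x ^ (α - 1) *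
      (exp (-lam * x) * (C * (r * x * deriv f x + (c - r * lam * x) * f x))) with hD₁def
    set D₂ : ℝ → ℝ := fun x => x ^ (α - 1) * (C * lam * F x)
      - x ^ (α - 1) * (x * (κ * G x)) with hD₂def
    have int₁ : IntegrableOn D₁ (Ioi (0:ℝ)) := by
      apply key
      · fun_prop
      · intro t ht; simp [hM t ht, hM' t ht]
    have int₂a : IntegrableOn (fun x => x ^ (α - 1) * (C * lam * F x)) (Ioi (0:ℝ)) := by
      apply key
      · fun_prop
      · intro t ht; simp [hF0 t ht]
    have int₂b : IntegrableOn (fun x => x ^ (α - 1) * (x * (κ * G x))) (Ioi (0:ℝ)) := by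
      apply key
      · fun_prop
      · intro t ht; simp [hG0 t ht]
    have int₂ : IntegrableOn D₂ (Ioi (0:ℝ)) := int₂a.sub int₂b
    have hrexp : ∀ x : ℝ, HasDerivAt (fun y => exp (-lam * y)) (-lam * exp (-lam * x)) x := by
      intro x
      have h : HasDerivAt (fun y : ℝ => -lam * y) (-lam) x := by
        simpa using (hasDerivAt_id x).const_mul (-lam)
      simpa [mul_comm] using h.exp
    have hG₁deriv : ∀ x ∈ Ioi (0:ℝ),
        HasDerivAt (fun y => r * C * (y ^ α * exp (-lam * y) * f y)) (D₁ x) x := by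
      intro x hx
      have hx0 : (0:ℝ) < x := hx
      have h1 : HasDerivAt (fun y : ℝ => y ^ α) (α * x ^ (α - 1)) x :=
        Real.hasDerivAt_rpow_const (Or.inl hx0.ne')
      have h : HasDerivAt (fun y => r * C * (y ^ α * exp (-lam * y) * f y)) _ x :=
        ((h1.mul (hrexp x)).mul (hdf x)).const_mul (r * C)
      convert h using 1
      have hxα : x ^ α = x ^ (α - 1) * x := by
        nth_rewrite 1 [show α = (α - 1) + 1 by ring]
        rw [Real.rpow_add_one hx0.ne']
      simp only [hD₁def, Pi.mul_apply]
      rw [hxα, hcα]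
      ring
    have hG₂deriv : ∀ x ∈ Ioi (0:ℝ),
        HasDerivAt (fun y => κ * (y ^ α * F y)) (D₂ x) x := by
      intro x hx
      have hx0 : (0:ℝ) < x := hx
      have h1 : HasDerivAt (fun y : ℝ => y ^ α) (α * x ^ (α - 1)) x :=
        Real.hasDerivAt_rpow_const (Or.inl hx0.ne')
      have h : HasDerivAt (fun y => κ * (y ^ α * F y)) _ x := (h1.mul (hFderiv x)).const_mul κ
      convert h using 1
      have hxα : x ^ α = x ^ (α - 1) * x := by
        nth_rewrite 1 [show α = (α - 1) + 1 by ring]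
        rw [Real.rpow_add_one hx0.ne']
      simp only [hD₂def, hκdef, Pi.mul_apply]
      rw [hxα, hcα]
      field_simp
      ring
    have hI₁ : (∫ x in Ioi (0:ℝ), D₁ x) = 0 := by
      have hcont0 : ContinuousWithinAt (fun y => r * C * (y ^ α * exp (-lam * y) * f y))
          (Ici 0) 0 := by
        apply ContinuousAt.continuousWithinAt
        exact continuousAt_const.mul (((Real.continuousAt_rpow_const 0 α (Or.inr hα.le)).mul
          (by fun_prop)).mul hfc.continuousAt)
      have htend : Tendsto (fun y => r * C * (y ^ α * exp (-lam * y) * f y)) atTop (nhds 0) := by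
        apply Tendsto.congr' _ tendsto_const_nhds
        filter_upwards [eventually_ge_atTop M] with y hy
        simp [hM y hy]
      have h := integral_Ioi_of_hasDerivAt_of_tendsto hcont0 hG₁deriv int₁ htend
      simpa [Real.zero_rpow hα.ne'] using h
    have hI₂ : (∫ x in Ioi (0:ℝ), D₂ x) = 0 := by
      have hcont0 : ContinuousWithinAt (fun y => κ * (y ^ α * F y)) (Ici 0) 0 := by
        apply ContinuousAt.continuousWithinAt
        exact continuousAt_const.mul ((Real.continuousAt_rpow_const 0 α
          (Or.inr hα.le)).mul hFcont.continuousAt)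
      have htend : Tendsto (fun y => κ * (y ^ α * F y)) atTop (nhds 0) := by
        apply Tendsto.congr' _ tendsto_const_nhds
        filter_upwards [eventually_ge_atTop M] with y hy
        simp [hF0 y hy]
      have h := integral_Ioi_of_hasDerivAt_of_tendsto hcont0 hG₂deriv int₂ htend
      simpa [Real.zero_rpow hα.ne'] using h
    have hfinal : ∀ x ∈ Ioi (0:ℝ),
        (-r * x * deriv f x
          + c * ∫ y in Ioi (0:ℝ), (f (x + y) - f x) * (lam * exp (-lam * y)))
          * (C * x ^ (α - 1) * exp (-lam * x))
        = c * D₂ x - D₁ x := by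
      intro x hx
      rw [hinner x]
      simp only [hD₁def, hD₂def, hGdef]
      have hexp1 : exp (lam * x) * exp (-lam * x) = 1 := by
        rw [← Real.exp_add]; ring_nf; exact Real.exp_zero
      linear_combination (c * C * lam * x ^ (α - 1) * F x) * hexp1
        + (x ^ (α - 1) * x * f x * exp (-lam * x)) * hκ
    calc (∫ x in Ioi (0:ℝ),
        (-r * x * deriv f x
          + c * ∫ y in Ioi (0:ℝ), (f (x + y) - f x) * (lam * exp (-lam * y)))
          * (C * x ^ (α - 1) * exp (-lam * x)))
        = ∫ x in Ioi (0:ℝ), (c * D₂ x - D₁ x) :=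
          setIntegral_congr_fun measurableSet_Ioi hfinal
      _ = c * (∫ x in Ioi (0:ℝ), D₂ x) - ∫ x in Ioi (0:ℝ), D₁ x := by
          rw [MeasureTheory.integral_sub (int₂.const_mul c) int₁,
            MeasureTheory.integral_const_mul]
      _ = 0 := by rw [hI₁, hI₂]; ring
end

section
/- Let $r, c, \lambda > 0$ and for $V > 0$ let $p_V = V/(V+\lambda)$. Let $\pi_V$ be the negative binomial distribution on $E_V = \{n/V : n \in \mathbb{N}\}$ given by $\pi_V(n/V) = \frac{(c/r)_n}{n!} p_V^n (1-p_V)^{c/r}$, and let $\pi$ be the gamma distribution on $(0,\infty)$ with density $\frac{\lambda^{c/r}}{\Gamma(c/r)} x^{c/r-1} e^{-\lambda x}$. Then $\pi_V$ converges weakly to $\pi$ as $V \to \infty$. -/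
open Filter Real
open MeasureTheory Set

namespace NBG



lemma tsum_pow_div_fact (μ : ℝ) : ∑' n : ℕ, μ ^ n / (n.factorial : ℝ) = Real.exp μ := by
  rw [Real.exp_eq_exp_ℝ, NormedSpace.exp_eq_tsum_div]

lemma shift_eq (μ : ℝ) : (fun n : ℕ => ((n + 1 : ℕ) : ℝ) * μ ^ (n + 1) / ((n+1).factorial : ℝ)) =
    fun n : ℕ => μ * (μ ^ n / (n.factorial : ℝ)) := by
  funext n
  rw [Nat.factorial_succ]
  push_cast
  field_simp
  ring

lemma summable_n_pow (μ : ℝ) : Summable (fun n : ℕ => (n : ℝ) * μ ^ n / (n.factorial : ℝ)) := by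
  rw [← summable_nat_add_iff 1]
  exact_mod_cast (shift_eq μ) ▸ ((Real.summable_pow_div_factorial μ).mul_left μ)

lemma tsum_n_pow (μ : ℝ) : ∑' n : ℕ, (n : ℝ) * μ ^ n / (n.factorial : ℝ) = μ * Real.exp μ := by
  rw [Summable.tsum_eq_zero_add (summable_n_pow μ)]
  simp only [Nat.cast_zero, zero_mul, zero_div, zero_add]
  push_cast
  rw [show (fun n : ℕ => ((n : ℝ) + 1) * μ ^ (n + 1) / (((n+1).factorial : ℝ))) =
      fun n : ℕ => μ * (μ ^ n / (n.factorial : ℝ)) by exact_mod_cast (shift_eq μ)]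
  rw [tsum_mul_left, tsum_pow_div_fact]

lemma shift2_eq (μ : ℝ) :
    (fun n : ℕ => ((n + 1 : ℕ) : ℝ) * (((n + 1 : ℕ) : ℝ) - 1) * μ ^ (n + 1) / ((n+1).factorial : ℝ)) =
    fun n : ℕ => μ * ((n : ℝ) * μ ^ n / (n.factorial : ℝ)) := by
  funext n
  rw [Nat.factorial_succ]
  push_cast
  field_simp
  ring

lemma summable_nn_pow (μ : ℝ) :
    Summable (fun n : ℕ => (n : ℝ) * ((n : ℝ) - 1) * μ ^ n / (n.factorial : ℝ)) := by
  rw [← summable_nat_add_iff 1]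
  exact_mod_cast (shift2_eq μ) ▸ ((summable_n_pow μ).mul_left μ)

lemma tsum_nn_pow (μ : ℝ) :
    ∑' n : ℕ, (n : ℝ) * ((n : ℝ) - 1) * μ ^ n / (n.factorial : ℝ) = μ ^ 2 * Real.exp μ := by
  rw [Summable.tsum_eq_zero_add (summable_nn_pow μ)]
  simp only [Nat.cast_zero, zero_mul, zero_div, zero_add]
  push_cast
  rw [show (fun n : ℕ => ((n : ℝ) + 1) * (((n : ℝ) + 1) - 1) * μ ^ (n + 1) / (((n+1).factorial : ℝ))) =
      fun n : ℕ => μ * ((n : ℝ) * μ ^ n / (n.factorial : ℝ)) by exact_mod_cast (shift2_eq μ)]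
  rw [tsum_mul_left, tsum_n_pow]
  ring

/-- second central moment of Poisson-like series -/
lemma summable_sq (μ c : ℝ) :
    Summable (fun n : ℕ => ((n : ℝ) - c) ^ 2 * μ ^ n / (n.factorial : ℝ)) := by
  have h : (fun n : ℕ => ((n : ℝ) - c) ^ 2 * μ ^ n / (n.factorial : ℝ)) =
      fun n : ℕ => ((n : ℝ) * ((n : ℝ) - 1) * μ ^ n / (n.factorial : ℝ))
        + ((1 - 2 * c) * ((n : ℝ) * μ ^ n / (n.factorial : ℝ))
        + c ^ 2 * (μ ^ n / (n.factorial : ℝ))) := by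
    funext n; field_simp; ring
  rw [h]
  exact (summable_nn_pow μ).add (((summable_n_pow μ).mul_left _).add
    ((Real.summable_pow_div_factorial μ).mul_left _))

lemma tsum_central_sq (μ : ℝ) :
    ∑' n : ℕ, ((n : ℝ) - μ) ^ 2 * μ ^ n / (n.factorial : ℝ) = μ * Real.exp μ := by
  have h : (fun n : ℕ => ((n : ℝ) - μ) ^ 2 * μ ^ n / (n.factorial : ℝ)) =
      fun n : ℕ => ((n : ℝ) * ((n : ℝ) - 1) * μ ^ n / (n.factorial : ℝ))
        + ((1 - 2 * μ) * ((n : ℝ) * μ ^ n / (n.factorial : ℝ))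
        + μ ^ 2 * (μ ^ n / (n.factorial : ℝ))) := by
    funext n; field_simp; ring
  rw [h, Summable.tsum_add (summable_nn_pow μ) (((summable_n_pow μ).mul_left _).add
      ((Real.summable_pow_div_factorial μ).mul_left _)),
    Summable.tsum_add ((summable_n_pow μ).mul_left _) ((Real.summable_pow_div_factorial μ).mul_left _),
    tsum_mul_left, tsum_mul_left, tsum_nn_pow, tsum_n_pow, tsum_pow_div_fact]
  ring

lemma poisson_concentration (f : ℝ → ℝ) (hf : Continuous f) (C : ℝ) (hC : ∀ y, |f y| ≤ C)
    {x : ℝ} (hx : 0 < x) :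
    Tendsto (fun V : ℝ =>
        ∑' n : ℕ, Real.exp (-(V * x)) * ((V * x) ^ n / (n.factorial : ℝ)) * f ((n : ℝ) / V))
      atTop (nhds (f x)) := by
  have hC0 : 0 ≤ C := (abs_nonneg _).trans (hC 0)
  rw [Metric.tendsto_nhds]
  intro ε hε
  obtain ⟨δ, hδ, hfd⟩ := Metric.continuous_iff.mp hf x (ε / 2) (by positivity)
  have hlim : Tendsto (fun V : ℝ => 2 * C / δ ^ 2 * x / V) atTop (nhds 0) :=
    Tendsto.div_atTop tendsto_const_nhds tendsto_id
  have h2 : ∀ᶠ V in atTop, 2 * C / δ ^ 2 * x / V < ε / 2 :=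
    hlim.eventually (eventually_lt_nhds (by positivity : (0:ℝ) < ε / 2))
  filter_upwards [h2, eventually_gt_atTop 0] with V hV2 hV0
  set μ := V * x with hμdef
  have hμ : 0 < μ := mul_pos hV0 hx
  set q : ℕ → ℝ := fun n => Real.exp (-μ) * (μ ^ n / (n.factorial : ℝ)) with hqdef
  have hqnn : ∀ n, 0 ≤ q n := fun n => by
    have : (0:ℝ) ≤ μ ^ n / (n.factorial : ℝ) := by positivity
    exact mul_nonneg (Real.exp_nonneg _) this
  have hq : Summable q := (Real.summable_pow_div_factorial μ).mul_left _
  have hqsum : ∑' n, q n = 1 := by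
    rw [hqdef, tsum_mul_left, tsum_pow_div_fact, ← Real.exp_add, neg_add_cancel, Real.exp_zero]
  have ha : Summable (fun n : ℕ => q n * f ((n : ℝ) / V)) := by
    refine Summable.of_norm_bounded (hq.mul_right C) fun n => ?_
    rw [Real.norm_eq_abs, abs_mul, abs_of_nonneg (hqnn n)]
    exact mul_le_mul_of_nonneg_left (hC _) (hqnn n)
  have hsub : Summable (fun n : ℕ => q n * (f ((n : ℝ) / V) - f x)) := by
    have := ha.sub (hq.mul_right (f x))
    simpa [mul_sub] using this
  have hkey : (∑' n : ℕ, q n * f ((n : ℝ) / V)) - f x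
      = ∑' n : ℕ, q n * (f ((n : ℝ) / V) - f x) := by
    rw [show (fun n : ℕ => q n * (f ((n : ℝ) / V) - f x))
        = fun n : ℕ => q n * f ((n : ℝ) / V) - q n * f x by funext n; ring,
      Summable.tsum_sub ha (hq.mul_right (f x)), tsum_mul_right, hqsum, one_mul]
  -- the dominating sequence
  set b2 : ℕ → ℝ := fun n =>
    Real.exp (-μ) * (2 * C / δ ^ 2) / V ^ 2 * (((n : ℝ) - μ) ^ 2 * μ ^ n / (n.factorial : ℝ))
    with hb2def
  have hb2 : Summable b2 := (summable_sq μ μ).mul_left _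
  have hb2eq : ∀ n : ℕ, q n * (2 * C / δ ^ 2 * ((n : ℝ) / V - x) ^ 2) = b2 n := by
    intro n
    have hx' : x = μ / V := by rw [hμdef, mul_comm, mul_div_assoc, div_self hV0.ne', mul_one]
    rw [hb2def, hqdef]
    have hsq : ((n : ℝ) / V - x) ^ 2 = ((n : ℝ) - μ) ^ 2 / V ^ 2 := by
      rw [hx', div_sub_div_same, div_pow]
    rw [hsq]; ring
  have hb : Summable (fun n : ℕ => q n * (ε / 2 + 2 * C / δ ^ 2 * ((n : ℝ) / V - x) ^ 2)) := by
    have : (fun n : ℕ => q n * (ε / 2 + 2 * C / δ ^ 2 * ((n : ℝ) / V - x) ^ 2))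
        = fun n : ℕ => q n * (ε / 2) + b2 n := by
      funext n; rw [← hb2eq n]; ring
    rw [this]
    exact (hq.mul_right _).add hb2
  have hptwise : ∀ n : ℕ, |q n * (f ((n : ℝ) / V) - f x)|
      ≤ q n * (ε / 2 + 2 * C / δ ^ 2 * ((n : ℝ) / V - x) ^ 2) := by
    intro n
    rw [abs_mul, abs_of_nonneg (hqnn n)]
    refine mul_le_mul_of_nonneg_left ?_ (hqnn n)
    by_cases hcase : dist ((n : ℝ) / V) x < δ
    · have h1 : |f ((n : ℝ) / V) - f x| < ε / 2 := by
        have := hfd _ hcase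
        rwa [Real.dist_eq] at this
      have h2 : (0:ℝ) ≤ 2 * C / δ ^ 2 * ((n : ℝ) / V - x) ^ 2 := by positivity
      linarith
    · push_neg at hcase
      rw [Real.dist_eq] at hcase
      have hδ2 : δ ^ 2 ≤ ((n : ℝ) / V - x) ^ 2 := by
        have := sq_abs ((n : ℝ) / V - x)
        nlinarith [abs_nonneg ((n : ℝ) / V - x)]
      have h2C : 2 * C ≤ 2 * C / δ ^ 2 * ((n : ℝ) / V - x) ^ 2 := by
        have h := mul_le_mul_of_nonneg_left hδ2 (by positivity : (0:ℝ) ≤ 2 * C / δ ^ 2)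
        calc 2 * C = 2 * C / δ ^ 2 * δ ^ 2 := by field_simp
        _ ≤ _ := h
      have : |f ((n : ℝ) / V) - f x| ≤ 2 * C := by
        calc |f ((n : ℝ) / V) - f x| ≤ |f ((n : ℝ) / V)| + |f x| := abs_sub _ _
        _ ≤ 2 * C := by have := hC ((n : ℝ) / V); have := hC x; linarith
      linarith [hε.le]
  have hb2sum : ∑' n, b2 n = 2 * C / δ ^ 2 * x / V := by
    rw [hb2def, tsum_mul_left, tsum_central_sq]
    have h1 : Real.exp (-μ) * Real.exp μ = 1 := by
      rw [← Real.exp_add, neg_add_cancel, Real.exp_zero]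
    have hre : Real.exp (-μ) * (2 * C / δ ^ 2) / V ^ 2 * (μ * Real.exp μ)
        = 2 * C / δ ^ 2 * (μ / V ^ 2) * (Real.exp (-μ) * Real.exp μ) := by ring
    rw [hre, h1, mul_one, hμdef]
    rw [show V * x / V ^ 2 = x / V by rw [pow_two]; field_simp]
    ring
  have hbsum : ∑' n : ℕ, q n * (ε / 2 + 2 * C / δ ^ 2 * ((n : ℝ) / V - x) ^ 2)
      = ε / 2 + 2 * C / δ ^ 2 * x / V := by
    rw [show (fun n : ℕ => q n * (ε / 2 + 2 * C / δ ^ 2 * ((n : ℝ) / V - x) ^ 2))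
        = fun n : ℕ => q n * (ε / 2) + b2 n by funext n; rw [← hb2eq n]; ring,
      Summable.tsum_add (hq.mul_right _) hb2, tsum_mul_right, hqsum, one_mul, hb2sum]
  rw [Real.dist_eq]
  calc |(∑' n : ℕ, Real.exp (-(V * x)) * ((V * x) ^ n / (n.factorial : ℝ)) * f ((n : ℝ) / V)) - f x|
      = |∑' n : ℕ, q n * (f ((n : ℝ) / V) - f x)| := by rw [← hkey]
    _ ≤ ∑' n : ℕ, |q n * (f ((n : ℝ) / V) - f x)| := by
        simpa only [Real.norm_eq_abs] using
          norm_tsum_le_tsum_norm (f := fun n : ℕ => q n * (f ((n : ℝ) / V) - f x))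
            (by simpa only [Real.norm_eq_abs] using hsub.abs)
    _ ≤ ∑' n : ℕ, q n * (ε / 2 + 2 * C / δ ^ 2 * ((n : ℝ) / V - x) ^ 2) :=
        Summable.tsum_le_tsum hptwise hsub.abs hb
    _ = ε / 2 + 2 * C / δ ^ 2 * x / V := hbsum
    _ < ε := by linarith


lemma gamma_asc {α : ℝ} (hα : 0 < α) (n : ℕ) :
    Real.Gamma (α + n) = (ascPochhammer ℝ n).eval α * Real.Gamma α := by
  induction n with
  | zero => simp
  | succ n ih =>
    have h0 : α + n ≠ 0 := by positivity
    rw [show α + (n + 1 : ℕ) = (α + n) + 1 by push_cast; ring,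
      Real.Gamma_add_one h0, ih, ascPochhammer_succ_eval]
    ring

lemma integrableOn_base {a b : ℝ} (ha : 0 < a) (hb : 0 < b) :
    IntegrableOn (fun x : ℝ => x ^ (a - 1) * Real.exp (-(b * x))) (Ioi 0) := by
  have h1 : IntegrableOn (fun x : ℝ => Real.exp (-(b * x)) * (b * x) ^ (a - 1)) (Ioi 0) := by
    have h := (integrableOn_Ioi_comp_mul_left_iff
      (fun x : ℝ => Real.exp (-x) * x ^ (a - 1)) 0 hb)
    rw [mul_zero] at h
    exact h.mpr (Real.GammaIntegral_convergent ha)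
  have h2 := h1.const_mul (b ^ (-(a - 1)) : ℝ)
  refine IntegrableOn.congr_fun h2 ?_ measurableSet_Ioi
  intro x hx
  have hx0 : (0:ℝ) < x := hx
  show b ^ (-(a - 1)) * (Real.exp (-(b * x)) * (b * x) ^ (a - 1))
      = x ^ (a - 1) * Real.exp (-(b * x))
  rw [Real.mul_rpow hb.le hx0.le, Real.rpow_neg hb.le]
  field_simp [(Real.rpow_pos_of_pos hb (a-1)).ne']

/-- The gamma density (up to the indicator of `Ioi 0`). -/
noncomputable def gam (lam α x : ℝ) : ℝ :=
  lam ^ α / Real.Gamma α * x ^ (α - 1) * Real.exp (-(lam * x))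

lemma gam_measurable (lam α : ℝ) : Measurable (gam lam α) := by
  have h1 : Measurable fun x : ℝ => x ^ (α - 1) := by measurability
  exact (measurable_const.mul h1).mul ((measurable_id.const_mul lam).neg.exp)

lemma gam_nonneg {lam α : ℝ} (hα : 0 < α) (hlam : 0 < lam) {x : ℝ} (hx : 0 < x) :
    0 ≤ gam lam α x := by
  unfold gam
  have h := Real.Gamma_pos_of_pos hα
  positivity

lemma gam_integrable {lam α : ℝ} (hα : 0 < α) (hlam : 0 < lam) :
    IntegrableOn (gam lam α) (Ioi 0) := by
  have h2 := (integrableOn_base hα hlam).const_mul (lam ^ α / Real.Gamma α)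
  refine IntegrableOn.congr_fun h2 ?_ measurableSet_Ioi
  intro x _
  show lam ^ α / Real.Gamma α * (x ^ (α - 1) * Real.exp (-(lam * x))) = gam lam α x
  unfold gam; ring

lemma pois_gam_eq {α lam V : ℝ} (hV : 0 < V) (n : ℕ) :
    ∀ x ∈ Ioi (0:ℝ),
      Real.exp (-(V * x)) * ((V * x) ^ n / (n.factorial : ℝ)) * gam lam α x
      = (V ^ n * lam ^ α / ((n.factorial : ℝ) * Real.Gamma α))
        * (x ^ (((n:ℝ) + α) - 1) * Real.exp (-((V + lam) * x))) := by
  intro x hx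
  have hx0 : (0:ℝ) < x := hx
  have hpow : x ^ (((n:ℝ) + α) - 1) = x ^ (n : ℕ) * x ^ (α - 1) := by
    rw [← Real.rpow_natCast x n, ← Real.rpow_add hx0]
    ring_nf
  have hexp : Real.exp (-((V + lam) * x)) = Real.exp (-(V * x)) * Real.exp (-(lam * x)) := by
    rw [← Real.exp_add]; ring_nf
  unfold gam
  rw [hpow, hexp, mul_pow]
  field_simp

lemma mixture {α lam V : ℝ} (hα : 0 < α) (hlam : 0 < lam) (hV : 0 < V) (n : ℕ) :
    ∫ x in Ioi 0, Real.exp (-(V * x)) * ((V * x) ^ n / (n.factorial : ℝ)) * gam lam α x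
    = (ascPochhammer ℝ n).eval α / (n.factorial : ℝ) * (V / (V + lam)) ^ n
      * (lam / (V + lam)) ^ α := by
  have hVl : 0 < V + lam := by linarith
  rw [setIntegral_congr_fun measurableSet_Ioi (pois_gam_eq hV n), integral_const_mul,
    integral_rpow_mul_exp_neg_mul_Ioi (by positivity : (0:ℝ) < (n:ℝ) + α) hVl,
    show (n : ℝ) + α = α + n by ring, gamma_asc hα n]
  have hΓ : Real.Gamma α ≠ 0 := (Real.Gamma_pos_of_pos hα).ne'
  have hfac : ((n.factorial : ℝ)) ≠ 0 := by positivity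
  have h1 : ((1:ℝ) / (V + lam)) ^ (α + (n:ℝ)) =
      (1 / (V + lam)) ^ α * ((1 / (V + lam)) ^ n : ℝ) := by
    rw [Real.rpow_add (by positivity), Real.rpow_natCast]
  rw [h1, one_div, Real.inv_rpow hVl.le, Real.div_rpow hlam.le hVl.le, div_pow]
  have hA : ((V + lam) ^ α : ℝ) ≠ 0 := (Real.rpow_pos_of_pos hVl α).ne'
  have hB : ((V + lam) ^ n : ℝ) ≠ 0 := pow_ne_zero n hVl.ne'
  field_simp
  rw [one_div, inv_pow, mul_comm, ← mul_assoc, mul_inv_cancel₀ hB, one_mul]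

lemma pois_gam_integrable {α lam V : ℝ} (hα : 0 < α) (hlam : 0 < lam) (hV : 0 < V) (n : ℕ) :
    IntegrableOn (fun x : ℝ =>
      Real.exp (-(V * x)) * ((V * x) ^ n / (n.factorial : ℝ)) * gam lam α x) (Ioi 0) := by
  have hVl : 0 < V + lam := by linarith
  have h2 := (integrableOn_base (show (0:ℝ) < (n:ℝ) + α by positivity) hVl).const_mul
    (V ^ n * lam ^ α / ((n.factorial : ℝ) * Real.Gamma α))
  exact IntegrableOn.congr_fun h2
    (fun x hx => ((pois_gam_eq hV n) x hx).symm) measurableSet_Ioi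

lemma summable_nb {α p : ℝ} (hα : 0 < α) (hp0 : 0 ≤ p) (hp : p < 1) :
    Summable (fun n : ℕ => (ascPochhammer ℝ n).eval α / (n.factorial : ℝ) * p ^ n) := by
  rcases eq_or_lt_of_le hp0 with h0 | h0
  · apply summable_of_ne_finset_zero (s := {0})
    intro n hn
    have hn1 : n ≠ 0 := by simpa using hn
    rw [← h0, zero_pow hn1, mul_zero]
  · set g : ℕ → ℝ := fun n => (ascPochhammer ℝ n).eval α / (n.factorial : ℝ) * p ^ n with hg
    have hgpos : ∀ n, 0 < g n := fun n => by
      have h1 := ascPochhammer_pos n α hα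
      have h2 : (0:ℝ) < (n.factorial : ℝ) := by positivity
      positivity
    refine summable_of_ratio_test_tendsto_lt_one hp
      (Eventually.of_forall fun n => (hgpos n).ne') ?_
    have hratio : ∀ n : ℕ, ‖g (n + 1)‖ / ‖g n‖ = p * (1 + (α - 1) * (1 / ((n:ℝ) + 1))) := by
      intro n
      rw [Real.norm_eq_abs, Real.norm_eq_abs, abs_of_pos (hgpos _), abs_of_pos (hgpos _), hg]
      simp only
      rw [ascPochhammer_succ_eval, Nat.factorial_succ, pow_succ]
      have h1 : ((n.factorial : ℝ)) ≠ 0 := by positivity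
      have h2 : ((n:ℝ) + 1) ≠ 0 := by positivity
      have h3 : (ascPochhammer ℝ n).eval α ≠ 0 := (ascPochhammer_pos n α hα).ne'
      push_cast
      field_simp
      ring
    rw [show (fun n : ℕ => ‖g (n+1)‖ / ‖g n‖)
        = fun n : ℕ => p * (1 + (α - 1) * (1 / ((n:ℝ) + 1))) from funext hratio]
    have : Tendsto (fun n : ℕ => p * (1 + (α - 1) * (1 / ((n:ℝ) + 1)))) atTop
        (nhds (p * (1 + (α - 1) * 0))) :=
      (tendsto_const_nhds.add
        ((tendsto_one_div_add_atTop_nhds_zero_nat).const_mul (α - 1))).const_mul p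
    simpa using this

lemma measurable_tsum_real {g : ℕ → ℝ → ℝ} (hg : ∀ n, Measurable (g n))
    (hsum : ∀ x, Summable fun n => g n x) : Measurable fun x => ∑' n, g n x := by
  refine measurable_of_tendsto_metrizable
    (f := fun N : ℕ => fun x => ∑ n ∈ Finset.range N, g n x)
    (fun N => Finset.measurable_sum _ fun n _ => hg n) ?_
  rw [tendsto_pi_nhds]
  exact fun x => (hsum x).hasSum.tendsto_sum_nat


lemma abs_tsum_pois_le {V x C : ℝ} (f : ℝ → ℝ) (hC : ∀ y, |f y| ≤ C) (hμ : 0 ≤ V * x) :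
    |∑' n : ℕ, Real.exp (-(V * x)) * ((V * x) ^ n / (n.factorial : ℝ)) * f ((n : ℝ) / V)|
      ≤ C := by
  set μ := V * x with hμdef
  set q : ℕ → ℝ := fun n => Real.exp (-μ) * (μ ^ n / (n.factorial : ℝ)) with hqdef
  have hqnn : ∀ n, 0 ≤ q n := fun n => by
    have : (0:ℝ) ≤ μ ^ n / (n.factorial : ℝ) := by positivity
    exact mul_nonneg (Real.exp_nonneg _) this
  have hq : Summable q := (Real.summable_pow_div_factorial μ).mul_left _
  have hqsum : ∑' n, q n = 1 := by
    rw [hqdef, tsum_mul_left, tsum_pow_div_fact, ← Real.exp_add, neg_add_cancel, Real.exp_zero]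
  have ha : Summable (fun n : ℕ => q n * f ((n : ℝ) / V)) := by
    refine Summable.of_norm_bounded (hq.mul_right C) fun n => ?_
    rw [Real.norm_eq_abs, abs_mul, abs_of_nonneg (hqnn n)]
    exact mul_le_mul_of_nonneg_left (hC _) (hqnn n)
  calc |∑' n : ℕ, Real.exp (-(V * x)) * ((V * x) ^ n / (n.factorial : ℝ)) * f ((n : ℝ) / V)|
      = |∑' n : ℕ, q n * f ((n : ℝ) / V)| := rfl
    _ ≤ ∑' n : ℕ, |q n * f ((n : ℝ) / V)| := by
        simpa only [Real.norm_eq_abs] using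
          norm_tsum_le_tsum_norm (f := fun n : ℕ => q n * f ((n : ℝ) / V))
            (by simpa only [Real.norm_eq_abs] using ha.abs)
    _ ≤ ∑' n : ℕ, q n * C := by
        refine Summable.tsum_le_tsum (fun n => ?_) ha.abs (hq.mul_right C)
        rw [abs_mul, abs_of_nonneg (hqnn n)]
        exact mul_le_mul_of_nonneg_left (hC _) (hqnn n)
    _ = C := by rw [tsum_mul_right, hqsum, one_mul]

end NBG

/-- Weak convergence of the negative binomial stationary distributions of the
mesoscopic model (on the lattice `{n/V}`) to the gamma stationary distribution
of the PDMP limit: for every bounded continuous `f`,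
`∑_n π_V(n/V) f(n/V) → ∫₀^∞ f(x) γ(x) dx` as `V → ∞`. -/
theorem negative_binomial_to_gamma (r c lam : ℝ)
    (hr : 0 < r) (hc : 0 < c) (hlam : 0 < lam) :
    ∀ f : ℝ → ℝ, Continuous f → (∃ C, ∀ x, |f x| ≤ C) →
      Tendsto (fun V : ℝ =>
          ∑' n : ℕ, ((ascPochhammer ℝ n).eval (c / r)) / (n.factorial : ℝ)
            * (V / (V + lam)) ^ n * (1 - V / (V + lam)) ^ (c / r) * f (n / V))
        atTop
        (nhds (∫ x in Set.Ioi (0:ℝ),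
          f x * (lam ^ (c / r) / Real.Gamma (c / r) * x ^ (c / r - 1)
            * exp (-lam * x)))) := by
  intro f hf hbdd
  obtain ⟨C, hC⟩ := hbdd
  have hα : 0 < c / r := div_pos hc hr
  have hC0 : 0 ≤ C := (abs_nonneg _).trans (hC 0)
  set α := c / r with hαdef
  -- rewrite the target integral in terms of `gam`
  have htarget : (∫ x in Ioi (0:ℝ),
      f x * (lam ^ α / Real.Gamma α * x ^ (α - 1) * Real.exp (-lam * x)))
      = ∫ x in Ioi (0:ℝ), f x * NBG.gam lam α x := by
    refine integral_congr_ae (Eventually.of_forall fun x => ?_)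
    unfold NBG.gam
    simp only [neg_mul]
  rw [htarget]
  -- Step B : dominated convergence
  have hB : Tendsto (fun V : ℝ => ∫ x in Ioi (0:ℝ),
      (∑' n : ℕ, Real.exp (-(V * x)) * ((V * x) ^ n / (n.factorial : ℝ)) * f ((n : ℝ) / V))
        * NBG.gam lam α x) atTop (nhds (∫ x in Ioi (0:ℝ), f x * NBG.gam lam α x)) := by
    refine tendsto_integral_filter_of_dominated_convergence (fun x => C * NBG.gam lam α x)
      ?_ ?_ ?_ ?_
    · refine Eventually.of_forall fun V => Measurable.aestronglyMeasurable ?_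
      refine (NBG.measurable_tsum_real (fun n => ?_) (fun x => ?_)).mul
        (NBG.gam_measurable lam α)
      · exact (((measurable_const.mul measurable_id).neg.exp).mul
          (((measurable_const.mul measurable_id).pow_const n).div_const _)).mul_const _
      · refine Summable.of_norm_bounded (g :=
          fun n => Real.exp (-(V * x)) * (|V * x| ^ n / (n.factorial : ℝ)) * C)
          (((Real.summable_pow_div_factorial (|V * x|)).mul_left
            (Real.exp (-(V * x)))).mul_right C) fun n => ?_
        rw [Real.norm_eq_abs, abs_mul, abs_mul, abs_of_pos (Real.exp_pos _), abs_div,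
          abs_pow, Nat.abs_cast]
        exact mul_le_mul_of_nonneg_left (hC _) (by positivity)
    · filter_upwards [eventually_gt_atTop 0] with V hV
      rw [ae_restrict_iff' measurableSet_Ioi]
      refine Eventually.of_forall fun x hx => ?_
      have hx0 : (0:ℝ) < x := hx
      have hgnn := NBG.gam_nonneg hα hlam hx0
      rw [Real.norm_eq_abs, abs_mul, abs_of_nonneg hgnn]
      exact mul_le_mul_of_nonneg_right
        (NBG.abs_tsum_pois_le f hC (by positivity)) hgnn
    · exact (NBG.gam_integrable hα hlam).const_mul C
    · rw [ae_restrict_iff' measurableSet_Ioi]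
      refine Eventually.of_forall fun x hx => ?_
      exact (NBG.poisson_concentration f hf C hC hx).mul_const (NBG.gam lam α x)
  -- Step A : eventual equality of the NB sum with the mixture integral
  have hA : (fun V : ℝ =>
      ∑' n : ℕ, ((ascPochhammer ℝ n).eval α) / (n.factorial : ℝ)
        * (V / (V + lam)) ^ n * (1 - V / (V + lam)) ^ α * f (n / V))
      =ᶠ[atTop] (fun V : ℝ => ∫ x in Ioi (0:ℝ),
        (∑' n : ℕ, Real.exp (-(V * x)) * ((V * x) ^ n / (n.factorial : ℝ)) * f ((n : ℝ) / V))
          * NBG.gam lam α x) := by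
    filter_upwards [eventually_gt_atTop 0] with V hV
    have hVl : 0 < V + lam := by linarith
    have hp1 : 1 - V / (V + lam) = lam / (V + lam) := by field_simp; ring
    have hp0 : 0 ≤ V / (V + lam) := by positivity
    have hplt : V / (V + lam) < 1 := by rw [div_lt_one hVl]; linarith
    set F : ℕ → ℝ → ℝ := fun n x =>
      Real.exp (-(V * x)) * ((V * x) ^ n / (n.factorial : ℝ)) * NBG.gam lam α x
        * f ((n : ℝ) / V) with hF
    have hFint : ∀ n, Integrable (F n) (volume.restrict (Ioi (0:ℝ))) := fun n =>
      (NBG.pois_gam_integrable hα hlam hV n).mul_const _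
    have hnorm : ∀ n : ℕ, (∫ x in Ioi (0:ℝ), ‖F n x‖)
        ≤ ((ascPochhammer ℝ n).eval α / (n.factorial : ℝ) * (V / (V + lam)) ^ n
          * (lam / (V + lam)) ^ α) * C := by
      intro n
      have hle : ∀ x ∈ Ioi (0:ℝ), ‖F n x‖
          ≤ Real.exp (-(V * x)) * ((V * x) ^ n / (n.factorial : ℝ)) * NBG.gam lam α x * C := by
        intro x hx
        have hx0 : (0:ℝ) < x := hx
        have hpnn : 0 ≤ Real.exp (-(V * x)) * ((V * x) ^ n / (n.factorial : ℝ))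
            * NBG.gam lam α x := by
          have h1 : (0:ℝ) ≤ (V * x) ^ n / (n.factorial : ℝ) := by positivity
          exact mul_nonneg (mul_nonneg (Real.exp_nonneg _) h1) (NBG.gam_nonneg hα hlam hx0)
        simp only [hF]
        rw [Real.norm_eq_abs, abs_mul, abs_of_nonneg hpnn]
        exact mul_le_mul_of_nonneg_left (hC _) hpnn
      calc (∫ x in Ioi (0:ℝ), ‖F n x‖)
          ≤ ∫ x in Ioi (0:ℝ), Real.exp (-(V * x)) * ((V * x) ^ n / (n.factorial : ℝ))
              * NBG.gam lam α x * C :=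
            setIntegral_mono_on (hFint n).norm
              ((NBG.pois_gam_integrable hα hlam hV n).mul_const C) measurableSet_Ioi hle
        _ = ((ascPochhammer ℝ n).eval α / (n.factorial : ℝ) * (V / (V + lam)) ^ n
              * (lam / (V + lam)) ^ α) * C := by
            rw [integral_mul_const, NBG.mixture hα hlam hV n]
    have hsummable : Summable (fun n : ℕ => ∫ x in Ioi (0:ℝ), ‖F n x‖) := by
      refine Summable.of_nonneg_of_le
        (fun n => integral_nonneg fun x => norm_nonneg _) hnorm ?_
      exact (((NBG.summable_nb hα hp0 hplt).mul_right _).mul_right C)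
    calc (∑' n : ℕ, ((ascPochhammer ℝ n).eval α) / (n.factorial : ℝ)
          * (V / (V + lam)) ^ n * (1 - V / (V + lam)) ^ α * f (n / V))
        = ∑' n : ℕ, ∫ x in Ioi (0:ℝ), F n x := by
          refine tsum_congr fun n => ?_
          rw [hp1, ← NBG.mixture hα hlam hV n, ← integral_mul_const]
      _ = ∫ x in Ioi (0:ℝ), ∑' n : ℕ, F n x :=
          integral_tsum_of_summable_integral_norm hFint hsummable
      _ = ∫ x in Ioi (0:ℝ),
            (∑' n : ℕ, Real.exp (-(V * x)) * ((V * x) ^ n / (n.factorial : ℝ)) * f ((n : ℝ) / V))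
              * NBG.gam lam α x := by
          refine integral_congr_ae (Eventually.of_forall fun x => ?_)
          simp only [hF]
          rw [← tsum_mul_right]
          exact tsum_congr fun n => by ring
  exact Tendsto.congr' hA.symm hB
end

section
/- Let $r, \lambda > 0$ and let $c: \mathbb{R}_+ \to \mathbb{R}_+$ be Lipschitz with $c(0) > 0$. Suppose $A > 0$ is such that $p(x) = A x^{-1} e^{-\lambda x + \frac{1}{r}\int_1^x \frac{c(y)}{y} dy}$ is a probability density on $(0,\infty)$. Then $p$ satisfies the stationary Liouville-type identity: for every $f \in C_c^1([0,\infty))$, $\int_0^\infty \left[-rxf'(x) + c(x)\int_0^\infty (f(x+y)-f(x))\lambda e^{-\lambda y} dy\right] p(x)\,dx = 0$. -/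
open MeasureTheory Real Set Filter

/-- The density `p(x) = A x⁻¹ exp(-λx + (1/r)∫₁^x c(y)/y dy)` is stationary
for the PDMP generator of autoregulated gene expression:
`∫ A f dπ = 0` for all `f ∈ C_c¹([0,∞))`. -/
theorem stationary_density_autoregulated (r lam : ℝ) (hr : 0 < r)
    (hlam : 0 < lam) (c : ℝ → ℝ) (hcnn : ∀ x, 0 ≤ c x)
    (Lc : ℝ) (hLip : ∀ x y, |c x - c y| ≤ Lc * |x - y|)
    (hc0 : 0 < c 0) (A : ℝ) (hA : 0 < A)
    (p : ℝ → ℝ)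
    (hp : ∀ x > 0, p x = A * x⁻¹ *
      exp (-lam * x + (1 / r) * ∫ y in (1:ℝ)..x, c y / y))
    (hnorm : (∫ x in Set.Ioi (0:ℝ), p x) = 1) :
    ∀ f : ℝ → ℝ, ContDiff ℝ 1 f → HasCompactSupport f →
      (∫ x in Set.Ioi (0:ℝ),
        (-r * x * deriv f x
          + c x * ∫ y in Set.Ioi (0:ℝ), (f (x + y) - f x) * (lam * exp (-lam * y)))
        * p x) = 0 := by
  intro f hf hfs
  have hLc : 0 ≤ Lc := le_trans (abs_nonneg _) (by simpa using hLip 0 1)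
  have hccont : Continuous c := by
    refine (LipschitzWith.of_dist_le_mul (K := Lc.toNNReal) (fun x y => ?_)).continuous
    simp only [Real.dist_eq, Real.coe_toNNReal _ hLc]
    exact hLip x y
  have hfc : Continuous f := hf.continuous
  have hf'c : Continuous (deriv f) := hf.continuous_deriv le_rfl
  have hf's : HasCompactSupport (deriv f) := hfs.deriv
  obtain ⟨M, hM1, hMf⟩ : ∃ M : ℝ, 1 ≤ M ∧ ∀ x, M ≤ x → f x = 0 := by
    obtain ⟨R, hR⟩ := hfs.isCompact.isBounded.subset_closedBall 0
    refine ⟨max R 1 + 1, by simp [le_max_right], fun x hx => ?_⟩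
    apply image_eq_zero_of_notMem_tsupport
    intro hmem
    have := hR hmem
    simp only [Metric.mem_closedBall, Real.dist_eq, sub_zero] at this
    have : x ≤ R := le_trans (le_abs_self x) this
    linarith [le_max_left R 1]
  -- integrability of p
  have hpint : IntegrableOn p (Ioi (0:ℝ)) := by
    by_contra h
    rw [MeasureTheory.integral_undef h] at hnorm
    norm_num at hnorm
  have hpmeas : AEStronglyMeasurable p (volume.restrict (Ioi (0:ℝ))) := hpint.1
  -- the antiderivative I
  set I : ℝ → ℝ := fun x => ∫ y in (1:ℝ)..x, c y / y with hIdef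
  have hInt : ∀ a b : ℝ, 0 < a → 0 < b →
      IntervalIntegrable (fun y => c y / y) volume a b := by
    intro a b ha hb
    apply ContinuousOn.intervalIntegrable
    apply ContinuousOn.div hccont.continuousOn continuousOn_id
    intro y hy
    exact (lt_of_lt_of_le (lt_min ha hb) hy.1).ne'
  have hI_deriv : ∀ x > (0:ℝ), HasDerivAt I (c x / x) x := by
    intro x hx
    apply intervalIntegral.integral_hasDerivAt_right (hInt 1 x one_pos hx)
    · exact ⟨Ioi 0, Ioi_mem_nhds hx, ((hccont.continuousOn.div continuousOn_id
        (fun y hy => (mem_Ioi.mp hy).ne')).aestronglyMeasurable measurableSet_Ioi)⟩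
    · exact (hccont.continuousAt).div continuousAt_id hx.ne'
  -- H = r x p(x), extended by 0
  set H : ℝ → ℝ := fun x => if 0 < x then r * A * exp (-lam * x + (1/r) * I x) else 0
    with hHdef
  have hH0 : H 0 = 0 := by simp [hHdef]
  have hHle : ∀ x ≤ (0:ℝ), H x = 0 := by
    intro x hx
    simp [hHdef, not_lt.mpr hx]
  have hHp : ∀ x > (0:ℝ), H x = r * x * p x := by
    intro x hx
    rw [hp x hx]
    simp only [hHdef, if_pos hx]
    field_simp
    ring
  have hH_deriv : ∀ x > (0:ℝ), HasDerivAt H ((c x - r * lam * x) * p x) x := by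
    intro x hx
    have hev : (fun u => r * A * exp (-lam * u + (1/r) * I u)) =ᶠ[nhds x] H := by
      filter_upwards [Ioi_mem_nhds hx] with u hu
      simp [hHdef, if_pos (mem_Ioi.mp hu)]
    have hd : HasDerivAt (fun u => r * A * exp (-lam * u + (1/r) * I u))
        ((r * A * exp (-lam * x + (1/r) * I x)) * (-lam + (1/r) * (c x / x))) x := by
      have h1 : HasDerivAt (fun u => -lam * u + (1/r) * I u) (-lam + (1/r) * (c x / x)) x := by
        have := ((hasDerivAt_id x).const_mul (-lam)).add ((hI_deriv x hx).const_mul (1/r))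
        exact this.congr_deriv (by ring)
      simpa [mul_comm, mul_assoc, mul_left_comm] using (h1.exp.const_mul (r * A))
    refine HasDerivAt.congr_of_eventuallyEq (hd.congr_deriv ?_) hev.symm
    rw [hp x hx]
    field_simp
    ring
  -- the behaviour of H at 0⁺
  have hHtendsto : Tendsto H (nhdsWithin 0 (Ioi 0)) (nhds 0) := by
    set δ : ℝ := min 1 (c 0 / (2 * (Lc + 1))) with hδdef
    have hδpos : 0 < δ := lt_min one_pos (div_pos hc0 (by linarith))
    have hclb : ∀ y : ℝ, 0 < y → y ≤ δ → c 0 / 2 ≤ c y := by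
      intro y hy hyδ
      have h1 : |c y - c 0| ≤ Lc * |y - 0| := hLip y 0
      rw [sub_zero, abs_of_pos hy] at h1
      have h2 : Lc * y ≤ (Lc + 1) * δ :=
        mul_le_mul (by linarith) hyδ (le_of_lt hy) (by linarith)
      have h3 : (Lc + 1) * δ ≤ c 0 / 2 := by
        rw [hδdef]
        calc (Lc + 1) * min 1 (c 0 / (2 * (Lc + 1))) ≤ (Lc + 1) * (c 0 / (2 * (Lc + 1))) :=
              mul_le_mul_of_nonneg_left (min_le_right _ _) (by linarith)
          _ = c 0 / 2 := by field_simp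
      have := abs_le.mp h1
      linarith [this.1]
    have hIbound : ∀ x : ℝ, 0 < x → x ≤ δ →
        I x ≤ I δ - (c 0 / 2) * (Real.log δ - Real.log x) := by
      intro x hx hxδ
      have hadd : (∫ y in (1:ℝ)..δ, c y / y) + (∫ y in δ..x, c y / y)
          = ∫ y in (1:ℝ)..x, c y / y :=
        intervalIntegral.integral_add_adjacent_intervals (hInt 1 δ one_pos hδpos)
          (hInt δ x hδpos hx)
      have hflip : (∫ y in δ..x, c y / y) = -∫ y in x..δ, c y / y :=
        intervalIntegral.integral_symm x δ
      have hmono : (∫ y in x..δ, (c 0 / 2) * y⁻¹) ≤ ∫ y in x..δ, c y / y := by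
        apply intervalIntegral.integral_mono_on hxδ
        · exact (ContinuousOn.intervalIntegrable (by
            apply ContinuousOn.mul continuousOn_const
            apply ContinuousOn.inv₀ continuousOn_id
            intro y hy
            exact (lt_of_lt_of_le (lt_min hx hδpos) hy.1).ne'))
        · exact hInt x δ hx hδpos
        · intro y hy
          have hy0 : 0 < y := lt_of_lt_of_le hx hy.1
          rw [div_eq_mul_inv]
          exact mul_le_mul_of_nonneg_right (hclb y hy0 hy.2) (by positivity)
      have hlogint : (∫ y in x..δ, (c 0 / 2) * y⁻¹)
          = (c 0 / 2) * (Real.log δ - Real.log x) := by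
        rw [intervalIntegral.integral_const_mul, integral_inv_of_pos hx hδpos,
          Real.log_div hδpos.ne' hx.ne']
      rw [hIdef]
      simp only []
      rw [← hadd, hflip]
      have := hlogint ▸ hmono
      linarith [this]
    set a : ℝ := c 0 / (2 * r) with hadef
    have ha : 0 < a := div_pos hc0 (by linarith)
    set K : ℝ := r * A * exp ((1/r) * I δ - a * Real.log δ) with hKdef
    have hub : ∀ᶠ x in nhdsWithin 0 (Ioi 0), H x ≤ K * exp (a * Real.log x) := by
      filter_upwards [Ioc_mem_nhdsGT_of_mem ⟨le_rfl, hδpos⟩] with x hx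
      rw [hHdef]
      simp only [if_pos hx.1]
      rw [hKdef, mul_assoc (r * A), ← Real.exp_add]
      apply mul_le_mul_of_nonneg_left _ (by positivity)
      apply Real.exp_le_exp.mpr
      have h1 := hIbound x hx.1 hx.2
      have h2 : (1/r) * I x ≤ (1/r) * (I δ - (c 0 / 2) * (Real.log δ - Real.log x)) :=
        mul_le_mul_of_nonneg_left h1 (by positivity)
      have hx0 : -lam * x ≤ 0 := by nlinarith [hx.1.le]
      have : (1/r) * ((c 0 / 2) * (Real.log δ - Real.log x))
          = a * Real.log δ - a * Real.log x := by
        rw [hadef]; field_simp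
      nlinarith [h2]
    have hlb : ∀ᶠ x in nhdsWithin 0 (Ioi 0), 0 ≤ H x := by
      filter_upwards with x
      rw [hHdef]
      by_cases h : 0 < x
      · simp only [if_pos h]; positivity
      · simp [if_neg h]
    have htb : Tendsto (fun x : ℝ => K * exp (a * Real.log x))
        (nhdsWithin 0 (Ioi 0)) (nhds 0) := by
      have h1 : Tendsto (fun x : ℝ => a * Real.log x) (nhdsWithin 0 (Ioi 0)) atBot :=
        (Real.tendsto_log_nhdsGT_zero).const_mul_atBot ha
      have h2 := (Real.tendsto_exp_atBot.comp h1).const_mul K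
      simpa using h2
    exact squeeze_zero' hlb hub htb
  have hHcont : Continuous H := by
    refine continuous_iff_continuousAt.mpr (fun x => ?_)
    rcases lt_trichotomy x 0 with hx | hx | hx
    · have : (fun _ => (0:ℝ)) =ᶠ[nhds x] H := by
        filter_upwards [Iio_mem_nhds hx] with u hu
        exact (hHle u (le_of_lt hu)).symm
      exact continuousAt_const.congr this
    · subst hx
      have hL : Tendsto H (nhdsWithin 0 (Iic 0)) (nhds 0) := by
        apply Tendsto.congr' _ tendsto_const_nhds
        filter_upwards [self_mem_nhdsWithin] with u hu
        exact (hHle u hu).symm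
      have h2 : Tendsto H (nhdsWithin (0:ℝ) (Iic 0) ⊔ nhdsWithin 0 (Ioi 0)) (nhds 0) :=
        tendsto_sup.mpr ⟨hL, hHtendsto⟩
      rw [nhdsLE_sup_nhdsGT] at h2
      rw [ContinuousAt, hH0]
      exact h2
    · exact (hH_deriv x hx).continuousAt
  -- G = H * exp(lam x)
  set G : ℝ → ℝ := fun x => H x * exp (lam * x) with hGdef
  have hGcont : Continuous G :=
    hHcont.mul (continuous_exp.comp (continuous_const.mul continuous_id))
  have hG_deriv : ∀ x > (0:ℝ), HasDerivAt G (c x * p x * exp (lam * x)) x := by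
    intro x hx
    have he : HasDerivAt (fun u => exp (lam * u)) (exp (lam * x) * lam) x := by
      have := ((hasDerivAt_id x).const_mul lam).exp
      simpa using this
    have h2 := (hH_deriv x hx).mul he
    exact h2.congr_deriv (by rw [hHp x hx]; ring)
  -- Φ
  have hfe_cont : Continuous (fun z => f z * exp (-lam * z)) :=
    hfc.mul (continuous_exp.comp (continuous_const.mul continuous_id))
  have hfe_supp : HasCompactSupport (fun z => f z * exp (-lam * z)) := hfs.mul_right
  have hfe_int : Integrable (fun z => f z * exp (-lam * z)) :=
    hfe_cont.integrable_of_hasCompactSupport hfe_supp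
  set Φ : ℝ → ℝ := fun x => ∫ z in Ioi x, f z * exp (-lam * z) with hPhidef
  have hPhi_eq : ∀ x : ℝ, Φ x = (∫ z in Ioi (0:ℝ), f z * exp (-lam * z))
      - ∫ z in (0:ℝ)..x, f z * exp (-lam * z) := by
    intro x
    rw [hPhidef]
    simp only []
    rcases le_or_gt 0 x with hx | hx
    · have hu : Ioc 0 x ∪ Ioi x = Ioi (0:ℝ) := Ioc_union_Ioi_eq_Ioi hx
      have h2 := MeasureTheory.setIntegral_union (Ioc_disjoint_Ioi le_rfl) measurableSet_Ioi
        (hfe_int.integrableOn (s := Ioc 0 x)) (hfe_int.integrableOn (s := Ioi x))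
      rw [hu] at h2
      rw [intervalIntegral.integral_of_le hx, h2]
      ring
    · have hu : Ioc x 0 ∪ Ioi 0 = Ioi x := Ioc_union_Ioi_eq_Ioi (le_of_lt hx)
      have h2 := MeasureTheory.setIntegral_union (Ioc_disjoint_Ioi le_rfl) measurableSet_Ioi
        (hfe_int.integrableOn (s := Ioc x 0)) (hfe_int.integrableOn (s := Ioi 0))
      rw [hu] at h2
      rw [intervalIntegral.integral_symm, intervalIntegral.integral_of_le (le_of_lt hx), h2]
      ring
  have hPhi_deriv : ∀ x : ℝ, HasDerivAt Φ (-(f x * exp (-lam * x))) x := by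
    intro x
    have h1 : HasDerivAt (fun u => ∫ z in (0:ℝ)..u, f z * exp (-lam * z))
        (f x * exp (-lam * x)) x :=
      intervalIntegral.integral_hasDerivAt_right (hfe_cont.intervalIntegrable _ _)
        (hfe_cont.stronglyMeasurableAtFilter _ _) hfe_cont.continuousAt
    have h2 := (hasDerivAt_const x (∫ z in Ioi (0:ℝ), f z * exp (-lam * z))).sub h1
    simp only [zero_sub] at h2
    refine HasDerivAt.congr_of_eventuallyEq h2 ?_
    filter_upwards with u
    rw [hPhi_eq u]
    rfl
  have hPhi_cont : Continuous Φ :=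
    continuous_iff_continuousAt.mpr (fun x => (hPhi_deriv x).continuousAt)
  have hPhi_zero : ∀ x, M ≤ x → Φ x = 0 := by
    intro x hx
    rw [hPhidef]
    apply MeasureTheory.setIntegral_eq_zero_of_forall_eq_zero
    intro z hz
    rw [hMf z (le_trans hx (le_of_lt hz)), zero_mul]
  -- exp integral = 1
  have hexpint : IntegrableOn (fun y => lam * exp (-lam * y)) (Ioi (0:ℝ)) := by
    have := (exp_neg_integrableOn_Ioi 0 hlam).const_mul lam
    exact this
  have hexp1 : (∫ y in Ioi (0:ℝ), lam * exp (-lam * y)) = 1 := by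
    have hderiv : ∀ y ∈ Ioi (0:ℝ),
        HasDerivAt (fun u => -exp (-lam * u)) (lam * exp (-lam * y)) y := by
      intro y _
      have := (((hasDerivAt_id y).const_mul (-lam)).exp).neg
      exact this.congr_deriv (by simp only [id_eq, mul_one, neg_mul, mul_neg, neg_neg]; ring)
    have htop : Tendsto (fun u => -exp (-lam * u)) atTop (nhds 0) := by
      have h1 : Tendsto (fun u : ℝ => -lam * u) atTop atBot :=
        tendsto_id.const_mul_atTop_of_neg (neg_lt_zero.mpr hlam)
      have := (Real.tendsto_exp_atBot.comp h1).neg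
      simpa using this
    have := MeasureTheory.integral_Ioi_of_hasDerivAt_of_tendsto
      (((continuous_exp.comp (continuous_const.mul continuous_id)).neg).continuousWithinAt) hderiv hexpint htop
    rw [this]
    norm_num
  -- inner integral identity
  have hJ : ∀ x : ℝ, (∫ y in Ioi (0:ℝ), (f (x + y) - f x) * (lam * exp (-lam * y)))
      = lam * exp (lam * x) * Φ x - f x := by
    intro x
    obtain ⟨Cf, hCf⟩ := hfs.exists_bound_of_continuous hfc
    have hmeas1 : AEStronglyMeasurable (fun y => f (x + y)) (volume.restrict (Ioi (0:ℝ))) :=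
      (hfc.comp (continuous_const.add continuous_id)).aestronglyMeasurable
    have int1 : IntegrableOn (fun y => f (x + y) * (lam * exp (-lam * y))) (Ioi (0:ℝ)) :=
      hexpint.bdd_mul hmeas1 (ae_of_all _ (fun y => hCf (x + y)))
    have int2 : IntegrableOn (fun y => f x * (lam * exp (-lam * y))) (Ioi (0:ℝ)) :=
      hexpint.const_mul (f x)
    have hsplit : (∫ y in Ioi (0:ℝ), (f (x + y) - f x) * (lam * exp (-lam * y)))
        = (∫ y in Ioi (0:ℝ), f (x + y) * (lam * exp (-lam * y)))
          - ∫ y in Ioi (0:ℝ), f x * (lam * exp (-lam * y)) := by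
      rw [← MeasureTheory.integral_sub int1 int2]
      congr 1
      funext y
      ring
    rw [hsplit]
    have h2 : (∫ y in Ioi (0:ℝ), f x * (lam * exp (-lam * y))) = f x := by
      rw [integral_const_mul, hexp1, mul_one]
    have h1 : (∫ y in Ioi (0:ℝ), f (x + y) * (lam * exp (-lam * y)))
        = lam * exp (lam * x) * Φ x := by
      have hrw : ∀ y : ℝ, f (x + y) * (lam * exp (-lam * y))
          = (lam * exp (lam * x)) * (f (y + x) * exp (-lam * (y + x))) := by
        intro y
        have e1 : exp (lam * x) * exp (-lam * (y + x)) = exp (-lam * y) := by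
          rw [← Real.exp_add]; congr 1; ring
        rw [add_comm x y]
        linear_combination lam * f (y + x) * e1.symm
      simp_rw [hrw]
      rw [integral_const_mul]
      congr 1
      have h := (measurePreserving_add_right volume x).setIntegral_preimage_emb
        (measurableEmbedding_addRight x) (fun z => f z * exp (-lam * z)) (Ioi x)
      rw [hPhidef]
      simp only []
      rw [← h]
      congr 1
      simp
    rw [h1, h2]
  -- integrability of the pieces
  have i1 : IntegrableOn (fun x => (c x - r * lam * x) * p x * f x) (Ioi (0:ℝ)) := by
    have hφc : Continuous (fun x => (c x - r * lam * x) * f x) :=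
      (hccont.sub ((continuous_const.mul continuous_id))).mul hfc
    have hφs : HasCompactSupport (fun x => (c x - r * lam * x) * f x) := hfs.mul_left
    obtain ⟨C1, hC1⟩ := hφs.exists_bound_of_continuous hφc
    have := hpint.bdd_mul (hφc.aestronglyMeasurable) (ae_of_all _ hC1)
    apply this.congr
    filter_upwards with x
    ring
  have i2 : IntegrableOn (fun x => H x * deriv f x) (Ioi (0:ℝ)) :=
    ((hHcont.mul hf'c).integrable_of_hasCompactSupport hf's.mul_left).integrableOn
  have g1int : IntegrableOn
      (fun x => (c x - r * lam * x) * p x * f x + H x * deriv f x) (Ioi (0:ℝ)) := i1.add i2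
  have i3 : IntegrableOn (fun x => c x * p x * exp (lam * x) * Φ x) (Ioi (0:ℝ)) := by
    obtain ⟨CΦ, hCΦ⟩ := (isCompact_Icc (a := (0:ℝ)) (b := M)).exists_bound_of_continuousOn
      hPhi_cont.continuousOn
    have hCΦ0 : 0 ≤ CΦ := le_trans (norm_nonneg _) (hCΦ 0 ⟨le_rfl, by linarith⟩)
    set C := (c 0 + Lc * M) * exp (lam * M) * CΦ with hCdef
    have hbd : ∀ x ∈ Ioi (0:ℝ), ‖c x * exp (lam * x) * Φ x‖ ≤ C := by
      intro x hx
      rcases le_or_gt x M with hxM | hxM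
      · have hcb : ‖c x‖ ≤ c 0 + Lc * M := by
          rw [Real.norm_eq_abs, abs_of_nonneg (hcnn x)]
          have h1 := abs_le.mp (hLip x 0)
          rw [sub_zero, abs_of_pos (mem_Ioi.mp hx)] at h1
          have : Lc * x ≤ Lc * M := mul_le_mul_of_nonneg_left hxM hLc
          linarith [h1.1]
        have heb : ‖exp (lam * x)‖ ≤ exp (lam * M) := by
          rw [Real.norm_eq_abs, abs_of_pos (exp_pos _)]
          exact exp_le_exp.mpr (mul_le_mul_of_nonneg_left hxM hlam.le)
        have hΦb : ‖Φ x‖ ≤ CΦ := hCΦ x ⟨(mem_Ioi.mp hx).le, hxM⟩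
        rw [hCdef, norm_mul, norm_mul]
        apply mul_le_mul _ hΦb (norm_nonneg _) (by positivity)
        exact mul_le_mul hcb heb (norm_nonneg _) (by positivity)
      · rw [hPhi_zero x hxM.le]
        simp only [mul_zero, norm_zero]
        rw [hCdef]
        have : 0 ≤ c 0 + Lc * M := by nlinarith
        positivity
    have hφmeas : AEStronglyMeasurable (fun x => c x * exp (lam * x) * Φ x)
        (volume.restrict (Ioi (0:ℝ))) :=
      ((hccont.mul (continuous_exp.comp (continuous_const.mul continuous_id))).mul
        hPhi_cont).aestronglyMeasurable
    have := hpint.bdd_mul hφmeas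
      ((ae_restrict_iff' measurableSet_Ioi).mpr (ae_of_all _ hbd))
    apply this.congr
    filter_upwards with x
    ring
  have i4 : IntegrableOn (fun x => G x * (-(f x * exp (-lam * x)))) (Ioi (0:ℝ)) := by
    have i4base : Integrable (fun x => G x * (f x * exp (-lam * x))) :=
      (hGcont.mul hfe_cont).integrable_of_hasCompactSupport hfe_supp.mul_left
    apply (i4base.neg.integrableOn (s := Ioi (0:ℝ))).congr
    filter_upwards with x
    simp only [Pi.neg_apply]
    ring
  have g2int : IntegrableOn
      (fun x => c x * p x * exp (lam * x) * Φ x + G x * (-(f x * exp (-lam * x))))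
      (Ioi (0:ℝ)) := i3.add i4
  -- Claim 1
  have claim1 : (∫ x in Ioi (0:ℝ),
      ((c x - r * lam * x) * p x * f x + H x * deriv f x)) = 0 := by
    have := MeasureTheory.integral_Ioi_of_hasDerivAt_of_tendsto
      (f := fun x => H x * f x)
      (f' := fun x => (c x - r * lam * x) * p x * f x + H x * deriv f x) (a := 0) (m := 0)
      ((hHcont.mul hfc).continuousWithinAt)
      (fun x hx => (hH_deriv x hx).mul ((hf.differentiable one_ne_zero x).hasDerivAt))
      g1int
      (by
        apply Tendsto.congr' _ tendsto_const_nhds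
        filter_upwards [Ici_mem_atTop M] with x hx
        rw [hMf x hx, mul_zero])
    rw [this]
    simp [hH0]
  -- Claim 2
  have claim2 : (∫ x in Ioi (0:ℝ),
      (c x * p x * exp (lam * x) * Φ x + G x * (-(f x * exp (-lam * x))))) = 0 := by
    have hG0 : G 0 = 0 := by simp only [hGdef]; rw [hH0]; ring
    have := MeasureTheory.integral_Ioi_of_hasDerivAt_of_tendsto
      (f := fun x => G x * Φ x)
      (f' := fun x => c x * p x * exp (lam * x) * Φ x + G x * (-(f x * exp (-lam * x))))
      (a := 0) (m := 0)
      ((hGcont.mul hPhi_cont).continuousWithinAt)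
      (fun x hx => (hG_deriv x hx).mul (hPhi_deriv x))
      g2int
      (by
        apply Tendsto.congr' _ tendsto_const_nhds
        filter_upwards [Ici_mem_atTop M] with x hx
        rw [hPhi_zero x hx, mul_zero])
    rw [this]
    simp [hG0]
  -- final assembly
  have key : EqOn
      (fun x => (-r * x * deriv f x
          + c x * ∫ y in Set.Ioi (0:ℝ), (f (x + y) - f x) * (lam * exp (-lam * y))) * p x)
      (fun x => -((c x - r * lam * x) * p x * f x + H x * deriv f x)
          + lam * (c x * p x * exp (lam * x) * Φ x + G x * (-(f x * exp (-lam * x)))))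
      (Ioi (0:ℝ)) := by
    intro x hx
    have hx0 : (0:ℝ) < x := hx
    simp only []
    rw [hJ x, hGdef]
    simp only []
    rw [hHp x hx0]
    have e1 : exp (lam * x) * exp (-lam * x) = 1 := by
      rw [← Real.exp_add]; simp
    linear_combination (lam * r * x * p x * f x) * e1
  rw [MeasureTheory.setIntegral_congr_fun measurableSet_Ioi key]
  have hneg : IntegrableOn
      (fun x => -((c x - r * lam * x) * p x * f x + H x * deriv f x)) (Ioi (0:ℝ)) := by
    apply g1int.neg.congr
    filter_upwards with x
    simp only [Pi.neg_apply]
  have hcm : IntegrableOn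
      (fun x => lam * (c x * p x * exp (lam * x) * Φ x + G x * (-(f x * exp (-lam * x)))))
      (Ioi (0:ℝ)) := g2int.const_mul lam
  rw [MeasureTheory.integral_add hneg hcm, MeasureTheory.integral_neg, integral_const_mul,
    claim1, claim2]
  ring
end

section
/- Let $V > 0$, $r > 0$, let $c: \mathbb{R}_+ \to \mathbb{R}_+$, $p_V \in (0,1)$, $q_V = 1 - p_V$, and define $\pi_V(n) = A_V \frac{p_V^n}{n!} \prod_{k=0}^{n-1}\left(\frac{1}{r}c(k/V) + k\right)$ for $n \ge 0$, where $A_V$ normalizes $\pi_V$ to a probability distribution (assume the normalizing sum is finite). Then $\pi_V$ satisfies the stationarity equation $\sum_{n=0}^\infty \pi_V(n)\, \mathcal{A}_V f(n) = 0$ for every finitely supported $f: \mathbb{N} \to \mathbb{R}$, where $\mathcal{A}_V f(n) = rn[f(n-1)-f(n)] + c(n/V) \sum_{m=1}^\infty p_V^m q_V [f(n+m)-f(n)]$. -/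
/-- Theorem 4.3 (stationarity of the explicit distribution): the distribution
`π_V(n) = A_V p^n/n! ∏_{k<n} (c(k/V)/r + k)` is stationary for the generator
`A_V f(n) = r n (f(n-1) - f(n)) + c(n/V) ∑_{m≥1} p^m q (f(n+m) - f(n))`
of the bursty gene expression Markov chain, i.e.
`∑_n π_V(n) A_V f(n) = 0` for every finitely supported `f`. -/
theorem discrete_stationary_distribution (V r : ℝ) (hV : 0 < V) (hr : 0 < r)
    (c : ℝ → ℝ) (hcnn : ∀ x, 0 ≤ c x)
    (p q : ℝ) (hp : p ∈ Set.Ioo (0:ℝ) 1) (hq : q = 1 - p)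
    (A : ℝ) (hA : 0 < A)
    (π : ℕ → ℝ)
    (hπ : ∀ n : ℕ, π n = A * p ^ n / (n.factorial : ℝ)
      * ∏ k ∈ Finset.range n, (c (k / V) / r + k))
    (hsum : Summable π) (hnorm : ∑' n : ℕ, π n = 1) :
    ∀ f : ℕ → ℝ, (Function.support f).Finite →
      ∑' n : ℕ, π n * (r * n * (f (n - 1) - f n)
        + c (n / V) * ∑' m : ℕ, p ^ (m + 1) * q * (f (n + (m + 1)) - f n)) = 0 := by
  intro f hf
  obtain ⟨hp0, hp1⟩ := hp
  obtain ⟨N, hN⟩ : ∃ N : ℕ, ∀ n, N ≤ n → f n = 0 := by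
    refine ⟨hf.toFinset.sup id + 1, fun n hn => ?_⟩
    by_contra h
    have hmem : n ∈ hf.toFinset := by simpa [Function.support] using h
    have := Finset.le_sup (f := id) hmem
    simp only [id] at this
    omega
  -- the basic recursion satisfied by π
  have hrec : ∀ j : ℕ, r * ((j : ℝ) + 1) * π (j + 1) = p * π j * (c (j / V) + r * j) := by
    intro j
    rw [hπ, hπ, Finset.prod_range_succ]
    have hfact : (((j+1).factorial : ℕ) : ℝ) = ((j:ℝ) + 1) * (j.factorial : ℝ) := by
      rw [Nat.factorial_succ]; push_cast; ring
    rw [hfact]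
    have h1 : ((j:ℝ)+1) ≠ 0 := by positivity
    have h2 : (j.factorial : ℝ) ≠ 0 := Nat.cast_ne_zero.2 j.factorial_ne_zero
    have h3 : r ≠ 0 := ne_of_gt hr
    field_simp
    ring
  -- key summation identity
  have hkey : ∀ j : ℕ, ∑ n ∈ Finset.range j, c (n / V) * π n * p ^ (j - n)
      = r * j * π j := by
    intro j
    induction j with
    | zero => simp
    | succ j ih =>
      rw [Finset.sum_range_succ]
      have h1 : ∀ n ∈ Finset.range j,
          c (n / V) * π n * p ^ (j + 1 - n) = p * (c (n / V) * π n * p ^ (j - n)) := by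
        intro n hn
        rw [Finset.mem_range] at hn
        have he : j + 1 - n = (j - n) + 1 := by omega
        rw [he, pow_succ]; ring
      rw [Finset.sum_congr rfl h1, ← Finset.mul_sum, ih]
      have h2 : j + 1 - j = 1 := by omega
      rw [h2, pow_one]
      push_cast
      rw [hrec j]
      ring
  have hgeosum : Summable (fun m : ℕ => p ^ m) := summable_geometric_of_lt_one hp0.le hp1
  have h1p : (1 : ℝ) - p ≠ 0 := by linarith
  have hgeo : ∑' m : ℕ, p ^ (m + 1) * q = p := by
    have e : (fun m : ℕ => p ^ (m+1) * q) = fun m => p ^ m * (p * q) := by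
      funext m; rw [pow_succ]; ring
    rw [e, tsum_mul_right, tsum_geometric_of_lt_one hp0.le hp1, hq]
    field_simp
  -- evaluation of the inner tsum
  have hinner : ∀ n : ℕ, (∑' m : ℕ, p ^ (m + 1) * q * (f (n + (m + 1)) - f n))
      = (∑ m ∈ Finset.range N, p ^ (m + 1) * q * f (n + (m + 1))) - p * f n := by
    intro n
    have hz : ∀ m ∉ Finset.range N, p ^ (m+1) * q * f (n + (m+1)) = 0 := by
      intro m hm
      rw [Finset.mem_range, not_lt] at hm
      rw [hN (n + (m+1)) (by omega), mul_zero]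
    have hsa : Summable (fun m : ℕ => p ^ (m+1) * q * f (n + (m+1))) :=
      summable_of_ne_finset_zero hz
    have hsb : Summable (fun m : ℕ => p ^ (m+1) * q * f n) := by
      have e : (fun m : ℕ => p ^ (m+1) * q * f n) = fun m => p ^ m * (p * q * f n) := by
        funext m; rw [pow_succ]; ring
      rw [e]; exact hgeosum.mul_right _
    have e : (fun m : ℕ => p ^ (m+1) * q * (f (n + (m+1)) - f n))
        = fun m => p ^ (m+1) * q * f (n + (m+1)) - p ^ (m+1) * q * f n := by
      funext m; ring
    rw [e, Summable.tsum_sub hsa hsb, tsum_eq_sum hz, tsum_mul_right, hgeo]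
  have hout : (fun n : ℕ => π n * (r * n * (f (n - 1) - f n)
        + c (n / V) * ∑' m : ℕ, p ^ (m + 1) * q * (f (n + (m + 1)) - f n)))
      = fun n : ℕ => π n * (r * n * (f (n - 1) - f n)
        + c (n / V) * ((∑ m ∈ Finset.range N, p ^ (m + 1) * q * f (n + (m + 1))) - p * f n)) := by
    funext n; rw [hinner n]
  rw [hout]
  have hz2 : ∀ n ∉ Finset.range (N+1), π n * (r * n * (f (n - 1) - f n)
      + c (n / V) * ((∑ m ∈ Finset.range N, p ^ (m + 1) * q * f (n + (m + 1))) - p * f n)) = 0 := by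
    intro n hn
    rw [Finset.mem_range, not_lt] at hn
    have h1 : f n = 0 := hN n (by omega)
    have h2 : f (n - 1) = 0 := hN (n - 1) (by omega)
    have h3 : ∑ m ∈ Finset.range N, p ^ (m + 1) * q * f (n + (m + 1)) = 0 :=
      Finset.sum_eq_zero fun m _ => by rw [hN (n + (m+1)) (by omega), mul_zero]
    rw [h1, h2, h3]
    ring
  rw [tsum_eq_sum hz2]
  -- expand each summand
  have hexp : ∀ n ∈ Finset.range (N+1),
      π n * (r * n * (f (n - 1) - f n)
        + c (n / V) * ((∑ m ∈ Finset.range N, p ^ (m + 1) * q * f (n + (m + 1))) - p * f n))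
      = (r * n * π n * f (n - 1) - r * n * π n * f n)
        + ((∑ m ∈ Finset.range N, c (n / V) * π n * p ^ (m + 1) * q * f (n + (m + 1)))
          - p * c (n / V) * π n * f n) := by
    intro n _
    have hms : (∑ m ∈ Finset.range N, c (n/V) * π n * p^(m+1) * q * f (n+(m+1)))
        = π n * c (n/V) * ∑ m ∈ Finset.range N, p^(m+1) * q * f (n+(m+1)) := by
      rw [Finset.mul_sum]; exact Finset.sum_congr rfl fun m _ => by ring
    rw [hms]; ring
  rw [Finset.sum_congr rfl hexp, Finset.sum_add_distrib, Finset.sum_sub_distrib,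
    Finset.sum_sub_distrib]
  have hS1 : ∑ n ∈ Finset.range (N+1), r * n * π n * f (n - 1)
      = ∑ j ∈ Finset.range N, p * π j * (c (j / V) + r * j) * f j := by
    rw [Finset.sum_range_succ']
    simp only [Nat.add_sub_cancel, Nat.cast_zero, mul_zero, zero_mul, add_zero]
    refine Finset.sum_congr rfl fun j _ => ?_
    push_cast
    rw [hrec j]
  have hS2 : ∑ n ∈ Finset.range (N+1), r * n * π n * f n
      = ∑ j ∈ Finset.range N, r * j * π j * f j := by
    rw [Finset.sum_range_succ, hN N le_rfl, mul_zero, add_zero]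
  have hS4 : ∑ n ∈ Finset.range (N+1), p * c (n / V) * π n * f n
      = ∑ j ∈ Finset.range N, p * c (j / V) * π j * f j := by
    rw [Finset.sum_range_succ, hN N le_rfl, mul_zero, add_zero]
  have hS3 : ∑ n ∈ Finset.range (N+1), ∑ m ∈ Finset.range N,
      c (n / V) * π n * p ^ (m+1) * q * f (n + (m+1))
      = ∑ j ∈ Finset.range N, q * (r * j * π j) * f j := by
    have hfd : ∀ k : ℕ, f k = ∑ j ∈ Finset.range N, if k = j then f j else 0 := by
      intro k
      rw [Finset.sum_ite_eq]
      by_cases hk : k ∈ Finset.range N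
      · rw [if_pos hk]
      · rw [if_neg hk]
        rw [Finset.mem_range, not_lt] at hk
        exact hN k hk
    have step1 : ∀ n m : ℕ, c (n / V) * π n * p ^ (m+1) * q * f (n + (m+1))
        = ∑ j ∈ Finset.range N,
            (if n + (m+1) = j then c (n / V) * π n * p ^ (m+1) * q * f j else 0) := by
      intro n m
      rw [hfd (n + (m+1)), Finset.mul_sum]
      exact Finset.sum_congr rfl fun j _ => by split <;> simp
    calc ∑ n ∈ Finset.range (N+1), ∑ m ∈ Finset.range N,
          c (n / V) * π n * p ^ (m+1) * q * f (n + (m+1))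
        = ∑ n ∈ Finset.range (N+1), ∑ m ∈ Finset.range N, ∑ j ∈ Finset.range N,
            (if n + (m+1) = j then c (n / V) * π n * p ^ (m+1) * q * f j else 0) := by
          exact Finset.sum_congr rfl fun n _ => Finset.sum_congr rfl fun m _ => step1 n m
      _ = ∑ j ∈ Finset.range N, ∑ n ∈ Finset.range (N+1), ∑ m ∈ Finset.range N,
            (if n + (m+1) = j then c (n / V) * π n * p ^ (m+1) * q * f j else 0) := by
          rw [show (∑ n ∈ Finset.range (N+1), ∑ m ∈ Finset.range N, ∑ j ∈ Finset.range N,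
              (if n + (m+1) = j then c (n / V) * π n * p ^ (m+1) * q * f j else 0))
            = ∑ n ∈ Finset.range (N+1), ∑ j ∈ Finset.range N, ∑ m ∈ Finset.range N,
              (if n + (m+1) = j then c (n / V) * π n * p ^ (m+1) * q * f j else 0)
            from Finset.sum_congr rfl fun n _ => Finset.sum_comm]
          exact Finset.sum_comm
      _ = ∑ j ∈ Finset.range N, ∑ n ∈ Finset.range (N+1),
            (if n < j then c (n / V) * π n * p ^ (j - n) * q * f j else 0) := by
          refine Finset.sum_congr rfl fun j hj => Finset.sum_congr rfl fun n _ => ?_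
          rw [Finset.mem_range] at hj
          by_cases hnj : n < j
          · rw [if_pos hnj, Finset.sum_eq_single (j - n - 1)]
            · rw [if_pos (by omega)]
              have he : j - n - 1 + 1 = j - n := by omega
              rw [he]
            · intro m _ hne
              exact if_neg (by omega)
            · intro habs
              exact absurd (Finset.mem_range.mpr (show j - n - 1 < N by omega)) habs
          · rw [if_neg hnj]
            exact Finset.sum_eq_zero fun m _ => if_neg (by omega)
      _ = ∑ j ∈ Finset.range N, ∑ n ∈ Finset.range j,
            c (n / V) * π n * p ^ (j - n) * q * f j := by
          refine Finset.sum_congr rfl fun j hj => ?_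
          rw [Finset.mem_range] at hj
          have hsub : Finset.range j ⊆ Finset.range (N+1) := Finset.range_subset_range.2 (by omega)
          rw [← Finset.sum_subset hsub
            (fun x _ hx => if_neg (by rw [Finset.mem_range, not_lt] at hx; omega))]
          exact Finset.sum_congr rfl fun n hn => if_pos (Finset.mem_range.1 hn)
      _ = ∑ j ∈ Finset.range N, q * (r * j * π j) * f j := by
          refine Finset.sum_congr rfl fun j _ => ?_
          have hms : ∑ n ∈ Finset.range j, c (n / V) * π n * p ^ (j - n) * q * f j
              = (∑ n ∈ Finset.range j, c (n / V) * π n * p ^ (j - n)) * (q * f j) := by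
            rw [Finset.sum_mul]; exact Finset.sum_congr rfl fun n _ => by ring
          rw [hms, hkey j]; ring
  rw [hS1, hS2, hS3, hS4, ← Finset.sum_sub_distrib, ← Finset.sum_sub_distrib,
    ← Finset.sum_add_distrib]
  refine Finset.sum_eq_zero fun j _ => ?_
  subst hq
  ring
end
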